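/- If p : ℕ → (0,1) satisfies p(n)²·n·log n ≤ 16/e⁵ for all n ≥ 2, then P(⟨G_{n,p(n)}⟩_{K_4} = E(K_n)) → 0 as n → ∞. -/

import Mathlib

open Finset

/-- The edge set of the copy of `H` under the injection `f`. -/
def copyEdges {W V : Type*} (H : SimpleGraph W) (f : W ↪ V) : Set (Sym2 V) :=
  Sym2.map f '' H.edgeSet

/-- One step of the `H`-bootstrap process: infect every edge `e` for which some copy of `H`
contains `e` and has all its other edges already infected. -/
def bootStep {W V : Type*} (H : SimpleGraph W) (E : Set (Sym2 V)) : Set (Sym2 V) :=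
  E ∪ {e | ∃ f : W ↪ V, e ∈ copyEdges H f ∧ copyEdges H f ⊆ insert e E}

/-- The closure of `E` under the `H`-bootstrap process. -/
def bootClosure {W V : Type*} (H : SimpleGraph W) (E : Set (Sym2 V)) : Set (Sym2 V) :=
  ⋃ t, (bootStep H)^[t] E

/-- `E` percolates in the `H`-bootstrap process on the complete graph on `V`. -/
def Percolates {W V : Type*} (H : SimpleGraph W) (E : Set (Sym2 V)) : Prop :=
  bootClosure H E = (⊤ : SimpleGraph V).edgeSet

/-- The expectation of `X` under the Erdős–Rényi random graph `G_{n,p}`,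
written as a sum over all graphs on `[n]`, weighted by their probabilities. -/
noncomputable def gnpExp (n : ℕ) (p : ℝ) (X : Finset (Sym2 (Fin n)) → ℝ) : ℝ :=
  ∑ E ∈ (⊤ : SimpleGraph (Fin n)).edgeFinset.powerset,
    p ^ E.card * (1 - p) ^ ((⊤ : SimpleGraph (Fin n)).edgeFinset.card - E.card) * X E

/- probability of event `A` under `G_{n,p}` -/
open Classical in
noncomputable def gnpProb (n : ℕ) (p : ℝ) (A : Finset (Sym2 (Fin n)) → Prop) : ℝ :=
  gnpExp n p (fun E => if A E then 1 else 0)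

/-- The critical probability for `H`-bootstrap percolation on `K_n`. -/
noncomputable def pc {W : Type*} (n : ℕ) (H : SimpleGraph W) : ℝ :=
  sInf {p : ℝ | p ∈ Set.Icc (0 : ℝ) 1 ∧
    1 / 2 ≤ gnpProb n p (fun E => Percolates H (↑E : Set (Sym2 (Fin n))))}

/-- `λ(r) = (C(r,2) - 2)/(r - 2)`. -/
noncomputable def lam (r : ℕ) : ℝ := ((r.choose 2 : ℝ) - 2) / ((r : ℝ) - 2)


set_option linter.unusedSectionVars false
set_option linter.unusedVariables false
set_option linter.unusedTactic false

/-- Inductive infection predicate for `K₄`-bootstrap. -/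
inductive Infd {V : Type*} (E : Set (Sym2 V)) : Sym2 V → Prop
  | base {e : Sym2 V} (he : e ∈ E) : Infd E e
  | step (a b c d : V) (hab : a ≠ b) (hac : a ≠ c) (had : a ≠ d)
      (hbc : b ≠ c) (hbd : b ≠ d) (hcd : c ≠ d)
      (h1 : Infd E s(a,c)) (h2 : Infd E s(a,d)) (h3 : Infd E s(b,c))
      (h4 : Infd E s(b,d)) (h5 : Infd E s(c,d)) : Infd E s(a,b)

theorem Infd.mono {V : Type*} {E E' : Set (Sym2 V)} (hEE : E ⊆ E') {e : Sym2 V}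
    (h : Infd E e) : Infd E' e := by
  induction h with
  | base he => exact Infd.base (hEE he)
  | step a b c d hab hac had hbc hbd hcd h1 h2 h3 h4 h5 ih1 ih2 ih3 ih4 ih5 =>
    exact Infd.step a b c d hab hac had hbc hbd hcd ih1 ih2 ih3 ih4 ih5

theorem infSet_bootStep_closed {V : Type*} (E S : Set (Sym2 V))
    (hS : S ⊆ {e | Infd E e}) : bootStep (SimpleGraph.completeGraph (Fin 4)) S ⊆ {e | Infd E e} := by
  rintro e (he | ⟨f, hec, hsub⟩)
  · exact hS he
  · obtain ⟨e₀, he₀, rfl⟩ := hec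
    induction e₀ using Sym2.ind with
    | _ i j =>
      have hij : i ≠ j := by
        simpa [SimpleGraph.completeGraph, SimpleGraph.mem_edgeSet] using he₀
      -- get the other two elements of Fin 4
      have hcard : (Finset.univ \ {i, j} : Finset (Fin 4)).card = 2 := by
        rw [Finset.card_sdiff_of_subset (by simp)]
        simp [Finset.card_insert_of_notMem, hij]
      obtain ⟨k, l, hkl, hset⟩ := Finset.card_eq_two.mp hcard
      have hk : k ∈ (Finset.univ \ {i, j} : Finset (Fin 4)) := by rw [hset]; simp
      have hl : l ∈ (Finset.univ \ {i, j} : Finset (Fin 4)) := by rw [hset]; simp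
      simp only [Finset.mem_sdiff, Finset.mem_insert, Finset.mem_singleton, not_or] at hk hl
      have hki : k ≠ i := hk.2.1
      have hkj : k ≠ j := hk.2.2
      have hli : l ≠ i := hl.2.1
      have hlj : l ≠ j := hl.2.2
      -- sources
      have hsrc : ∀ u v : Fin 4, u ≠ v → s(u, v) ≠ s(i, j) →
          Sym2.map f s(u, v) ∈ S := by
        intro u v huv hne
        have h1 : Sym2.map f s(u,v) ∈ copyEdges (SimpleGraph.completeGraph (Fin 4)) f := by
          exact ⟨s(u,v), by simpa [SimpleGraph.completeGraph, SimpleGraph.mem_edgeSet] using huv, rfl⟩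
        rcases hsub h1 with h | h
        · exact absurd (Sym2.map.injective f.injective h) hne
        · exact h
      have hInf : ∀ u v : Fin 4, u ≠ v → s(u, v) ≠ s(i, j) →
          Infd E (Sym2.map f s(u, v)) := fun u v huv hne => hS (hsrc u v huv hne)
      have hne1 : s(i,k) ≠ s(i,j) := by simp only [Ne, Sym2.eq_iff, not_or]; tauto
      have hne2 : s(i,l) ≠ s(i,j) := by simp only [Ne, Sym2.eq_iff, not_or]; tauto
      have hne3 : s(j,k) ≠ s(i,j) := by simp only [Ne, Sym2.eq_iff, not_or]; tauto
      have hne4 : s(j,l) ≠ s(i,j) := by simp only [Ne, Sym2.eq_iff, not_or]; tauto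
      have hne5 : s(k,l) ≠ s(i,j) := by simp only [Ne, Sym2.eq_iff, not_or]; tauto
      have fi : ∀ u v : Fin 4, Sym2.map f s(u,v) = s(f u, f v) := fun u v => rfl
      show Infd E (Sym2.map f s(i,j))
      rw [show Sym2.map f s(i,j) = s(f i, f j) from rfl]
      exact Infd.step (f i) (f j) (f k) (f l)
        (fun h => hij (f.injective h)) (fun h => hki.symm (f.injective h))
        (fun h => hli.symm (f.injective h)) (fun h => hkj.symm (f.injective h))
        (fun h => hlj.symm (f.injective h)) (fun h => hkl (f.injective h))
        (by rw [← fi]; exact hInf i k hki.symm hne1)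
        (by rw [← fi]; exact hInf i l hli.symm hne2)
        (by rw [← fi]; exact hInf j k hkj.symm hne3)
        (by rw [← fi]; exact hInf j l hlj.symm hne4)
        (by rw [← fi]; exact hInf k l hkl hne5)

theorem percolates_inf {V : Type*} {E : Set (Sym2 V)}
    (hperc : Percolates (SimpleGraph.completeGraph (Fin 4)) E) {u v : V} (huv : u ≠ v) :
    Infd E s(u, v) := by
  have h1 : s(u,v) ∈ bootClosure (SimpleGraph.completeGraph (Fin 4)) E := by
    rw [hperc]; simpa [SimpleGraph.mem_edgeSet] using huv
  rw [bootClosure, Set.mem_iUnion] at h1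
  obtain ⟨t, ht⟩ := h1
  suffices h : ∀ t, (bootStep (SimpleGraph.completeGraph (Fin 4)))^[t] E ⊆ {e | Infd E e} by
    exact h t ht
  intro t
  induction t with
  | zero => exact fun e he => Infd.base he
  | succ t ih =>
    rw [Function.iterate_succ_apply']
    exact infSet_bootStep_closed E _ ih

section Layer2
variable {V : Type*} [DecidableEq V]

/-- Edges of `E` entirely inside `S`. -/
def restrictE (E : Set (Sym2 V)) (S : Finset V) : Set (Sym2 V) :=
  {e | e ∈ E ∧ ∀ x ∈ e, x ∈ S}

theorem restrictE_mono {E : Set (Sym2 V)} {S T : Finset V} (h : S ⊆ T) :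
    restrictE E S ⊆ restrictE E T := fun e he => ⟨he.1, fun x hx => h (he.2 x hx)⟩

theorem restrictE_subset (E : Set (Sym2 V)) (S : Finset V) : restrictE E S ⊆ E :=
  fun _ he => he.1

/-- `S` is internally spanned. -/
def ISp (E : Set (Sym2 V)) (S : Finset V) : Prop :=
  ∀ u ∈ S, ∀ v ∈ S, u ≠ v → Infd (restrictE E S) s(u, v)

/-- Merging two completely-infected vertex sets sharing two vertices. -/
theorem merge_complete {E0 : Set (Sym2 V)} {W1 W2 : Finset V} {x y : V}
    (hx1 : x ∈ W1) (hx2 : x ∈ W2) (hy1 : y ∈ W1) (hy2 : y ∈ W2) (hxy : x ≠ y)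
    (h1 : ∀ u ∈ W1, ∀ v ∈ W1, u ≠ v → Infd E0 s(u,v))
    (h2 : ∀ u ∈ W2, ∀ v ∈ W2, u ≠ v → Infd E0 s(u,v)) :
    ∀ u ∈ W1 ∪ W2, ∀ v ∈ W1 ∪ W2, u ≠ v → Infd E0 s(u,v) := by
  have key : ∀ u ∈ W1, u ∉ W2 → ∀ v ∈ W2, v ∉ W1 → u ≠ v → Infd E0 s(u,v) := by
    intro u hu hu2 v hv hv1 huv
    have hux : u ≠ x := fun h => hu2 (h ▸ hx2)
    have huy : u ≠ y := fun h => hu2 (h ▸ hy2)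
    have hvx : v ≠ x := fun h => hv1 (h ▸ hx1)
    have hvy : v ≠ y := fun h => hv1 (h ▸ hy1)
    exact Infd.step u v x y huv hux huy hvx hvy hxy
      (h1 u hu x hx1 hux) (h1 u hu y hy1 huy)
      (h2 v hv x hx2 hvx) (h2 v hv y hy2 hvy) (h1 x hx1 y hy1 hxy)
  intro u hu v hv huv
  rcases Finset.mem_union.mp hu with hu1 | hu2 <;>
    rcases Finset.mem_union.mp hv with hv1 | hv2
  · exact h1 u hu1 v hv1 huv
  · by_cases hu2 : u ∈ W2
    · exact h2 u hu2 v hv2 huv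
    · by_cases hv1 : v ∈ W1
      · exact h1 u hu1 v hv1 huv
      · exact key u hu1 hu2 v hv2 hv1 huv
  · by_cases hv2 : v ∈ W2
    · exact h2 u hu2 v hv2 huv
    · by_cases hu1 : u ∈ W1
      · exact h1 u hu1 v hv1 huv
      · rw [Sym2.eq_swap]; exact key v hv1 hv2 u hu2 hu1 huv.symm
  · exact h2 u hu2 v hv2 huv

theorem witness_scale {E : Set (Sym2 V)} (hnd : ∀ e ∈ E, ¬ e.IsDiag) (L : ℕ) (hL : 3 ≤ L)
    {e : Sym2 V} (he : Infd E e) :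
    (∃ S : Finset V, ISp E S ∧ L ≤ S.card ∧ S.card ≤ 5 * L) ∨
    (∃ S : Finset V, ISp E S ∧ (∀ x ∈ e, x ∈ S) ∧ 2 ≤ S.card ∧ S.card < L) := by
  induction he with
  | base he =>
    right
    rename_i e'
    induction e' using Sym2.ind with
    | _ u v =>
      have huv : u ≠ v := by
        have := hnd _ he; rwa [Sym2.mk_isDiag_iff] at this
      refine ⟨{u, v}, ?_, ?_, ?_, ?_⟩
      · intro u' hu' v' hv' hne
        have hmem : s(u,v) ∈ restrictE E {u, v} := by
          refine ⟨he, fun x hx => ?_⟩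
          rcases Sym2.mem_iff.mp hx with rfl | rfl <;> simp
        simp only [Finset.mem_insert, Finset.mem_singleton] at hu' hv'
        rcases hu' with rfl | rfl <;> rcases hv' with rfl | rfl
        · exact absurd rfl hne
        · exact Infd.base hmem
        · rw [Sym2.eq_swap]; exact Infd.base hmem
        · exact absurd rfl hne
      · intro x hx
        rcases Sym2.mem_iff.mp hx with rfl | rfl <;> simp
      · rw [Finset.card_insert_of_notMem (by simpa using huv), Finset.card_singleton]
      · rw [Finset.card_insert_of_notMem (by simpa using huv), Finset.card_singleton]
        omega
  | step a b c d hab hac had hbc hbd hcd h1 h2 h3 h4 h5 ih1 ih2 ih3 ih4 ih5 =>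
    rcases ih1 with h | ⟨T1, hT1, hm1, hc1, hl1⟩; · exact Or.inl h
    rcases ih2 with h | ⟨T2, hT2, hm2, hc2, hl2⟩; · exact Or.inl h
    rcases ih3 with h | ⟨T3, hT3, hm3, hc3, hl3⟩; · exact Or.inl h
    rcases ih4 with h | ⟨T4, hT4, hm4, hc4, hl4⟩; · exact Or.inl h
    rcases ih5 with h | ⟨T5, hT5, hm5, hc5, hl5⟩; · exact Or.inl h
    set U : Finset V := T4 ∪ (T3 ∪ (T2 ∪ (T1 ∪ (T5 ∪ {a,b,c,d})))) with hU
    have hsub1 : T1 ⊆ U := fun z hz => by simp [hU, hz]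
    have hsub2 : T2 ⊆ U := fun z hz => by simp [hU, hz]
    have hsub3 : T3 ⊆ U := fun z hz => by simp [hU, hz]
    have hsub4 : T4 ⊆ U := fun z hz => by simp [hU, hz]
    have hsub5 : T5 ⊆ U := fun z hz => by simp [hU, hz]
    have hsub6 : ({a,b,c,d} : Finset V) ⊆ U := fun z hz => by
      simp only [Finset.mem_insert, Finset.mem_singleton] at hz
      simp only [hU, Finset.mem_union, Finset.mem_insert, Finset.mem_singleton]
      tauto
    set E0 := restrictE E U with hE0
    have step1 : ∀ (T : Finset V), T ⊆ U → ISp E T →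
        ∀ u ∈ T, ∀ v ∈ T, u ≠ v → Infd E0 s(u,v) := by
      intro T hTU hT u hu v hv huv
      exact (hT u hu v hv huv).mono (restrictE_mono hTU)
    have haT1 : a ∈ T1 := hm1 a (Sym2.mem_mk_left a c)
    have hcT1 : c ∈ T1 := hm1 c (Sym2.mem_mk_right a c)
    have haT2 : a ∈ T2 := hm2 a (Sym2.mem_mk_left a d)
    have hdT2 : d ∈ T2 := hm2 d (Sym2.mem_mk_right a d)
    have hbT3 : b ∈ T3 := hm3 b (Sym2.mem_mk_left b c)
    have hcT3 : c ∈ T3 := hm3 c (Sym2.mem_mk_right b c)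
    have hbT4 : b ∈ T4 := hm4 b (Sym2.mem_mk_left b d)
    have hdT4 : d ∈ T4 := hm4 d (Sym2.mem_mk_right b d)
    have hcT5 : c ∈ T5 := hm5 c (Sym2.mem_mk_left c d)
    have hdT5 : d ∈ T5 := hm5 d (Sym2.mem_mk_right c d)
    have hac' : Infd E0 s(a,c) := step1 T1 hsub1 hT1 a haT1 c hcT1 hac
    have had' : Infd E0 s(a,d) := step1 T2 hsub2 hT2 a haT2 d hdT2 had
    have hbc' : Infd E0 s(b,c) := step1 T3 hsub3 hT3 b hbT3 c hcT3 hbc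
    have hbd' : Infd E0 s(b,d) := step1 T4 hsub4 hT4 b hbT4 d hdT4 hbd
    have hcd' : Infd E0 s(c,d) := step1 T5 hsub5 hT5 c hcT5 d hdT5 hcd
    have hab' : Infd E0 s(a,b) :=
      Infd.step a b c d hab hac had hbc hbd hcd hac' had' hbc' hbd' hcd'
    have compl4 : ∀ u ∈ ({a,b,c,d} : Finset V), ∀ v ∈ ({a,b,c,d} : Finset V),
        u ≠ v → Infd E0 s(u,v) := by
      have hba' : Infd E0 s(b,a) := by rw [Sym2.eq_swap]; exact hab'
      have hca' : Infd E0 s(c,a) := by rw [Sym2.eq_swap]; exact hac'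
      have hda' : Infd E0 s(d,a) := by rw [Sym2.eq_swap]; exact had'
      have hcb' : Infd E0 s(c,b) := by rw [Sym2.eq_swap]; exact hbc'
      have hdb' : Infd E0 s(d,b) := by rw [Sym2.eq_swap]; exact hbd'
      have hdc' : Infd E0 s(d,c) := by rw [Sym2.eq_swap]; exact hcd'
      intro u hu v hv huv
      simp only [Finset.mem_insert, Finset.mem_singleton] at hu hv
      rcases hu with rfl | rfl | rfl | rfl <;> rcases hv with rfl | rfl | rfl | rfl <;>
        first
          | exact absurd rfl huv
          | assumption
    -- chain of merges
    have m1 : ∀ u ∈ T5 ∪ {a,b,c,d}, ∀ v ∈ T5 ∪ {a,b,c,d}, u ≠ v → Infd E0 s(u,v) :=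
      merge_complete hcT5 (by simp) hdT5 (by simp) hcd
        (step1 T5 hsub5 hT5) compl4
    have m2 : ∀ u ∈ T1 ∪ (T5 ∪ {a,b,c,d}), ∀ v ∈ T1 ∪ (T5 ∪ {a,b,c,d}), u ≠ v →
        Infd E0 s(u,v) :=
      merge_complete haT1 (by simp) hcT1 (by simp [hcT5]) hac
        (step1 T1 hsub1 hT1) m1
    have m3 : ∀ u ∈ T2 ∪ (T1 ∪ (T5 ∪ {a,b,c,d})), ∀ v ∈ T2 ∪ (T1 ∪ (T5 ∪ {a,b,c,d})),
        u ≠ v → Infd E0 s(u,v) :=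
      merge_complete haT2 (by simp [haT1]) hdT2 (by simp [hdT5]) had
        (step1 T2 hsub2 hT2) m2
    have m4 : ∀ u ∈ T3 ∪ (T2 ∪ (T1 ∪ (T5 ∪ {a,b,c,d}))),
        ∀ v ∈ T3 ∪ (T2 ∪ (T1 ∪ (T5 ∪ {a,b,c,d}))), u ≠ v → Infd E0 s(u,v) :=
      merge_complete hbT3 (by simp) hcT3 (by simp [hcT5]) hbc
        (step1 T3 hsub3 hT3) m3
    have m5 : ∀ u ∈ U, ∀ v ∈ U, u ≠ v → Infd E0 s(u,v) :=
      merge_complete hbT4 (by simp [hbT3]) hdT4 (by simp [hdT5]) hbd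
        (step1 T4 hsub4 hT4) m4
    have hISU : ISp E U := m5
    have hcardU : U.card ≤ 5 * L - 1 := by
      have c6 : ({a,b,c,d} : Finset V).card ≤ 4 := by
        apply le_trans (Finset.card_insert_le _ _)
        apply Nat.succ_le_succ
        apply le_trans (Finset.card_insert_le _ _)
        apply Nat.succ_le_succ
        apply le_trans (Finset.card_insert_le _ _)
        apply Nat.succ_le_succ
        simp
      calc U.card ≤ T4.card + (T3 ∪ (T2 ∪ (T1 ∪ (T5 ∪ {a,b,c,d})))).card :=
            Finset.card_union_le _ _
        _ ≤ T4.card + (T3.card + (T2.card + (T1.card + (T5.card + 4)))) := by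
            have := Finset.card_union_le T3 (T2 ∪ (T1 ∪ (T5 ∪ ({a,b,c,d} : Finset V))))
            have := Finset.card_union_le T2 (T1 ∪ (T5 ∪ ({a,b,c,d} : Finset V)))
            have := Finset.card_union_le T1 (T5 ∪ ({a,b,c,d} : Finset V))
            have := Finset.card_union_le T5 ({a,b,c,d} : Finset V)
            omega
        _ ≤ 5 * L - 1 := by omega
    by_cases hbig : L ≤ U.card
    · exact Or.inl ⟨U, hISU, hbig, by omega⟩
    · refine Or.inr ⟨U, hISU, ?_, ?_, by omega⟩
      · intro x hx
        rcases Sym2.mem_iff.mp hx with rfl | rfl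
        · exact hsub6 (by simp)
        · exact hsub6 (by simp)
      · have ha : a ∈ U := hsub6 (by simp)
        have hb : b ∈ U := hsub6 (by simp)
        exact Finset.one_lt_card.mpr ⟨a, ha, b, hb, hab⟩

end Layer2

section Rigidity
variable {n : ℕ}

noncomputable def pt (i : Fin n) : ℝ × ℝ := (((i : ℕ) : ℝ), ((i : ℕ) : ℝ) ^ 2)

noncomputable def rEdge (u v : Fin n) : Fin n → ℝ × ℝ := fun w =>
  if w = u then pt u - pt v else if w = v then pt v - pt u else 0

theorem rEdge_symm (u v : Fin n) : rEdge u v = rEdge v u := by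
  funext w
  unfold rEdge
  by_cases h1 : w = u <;> by_cases h2 : w = v <;> simp [h1, h2]
  · have huv : u = v := h1.symm.trans h2; subst huv; simp
  · intro h; exact absurd (h1.trans h) h2
  · intro h; exact absurd (h2.trans h) h1

noncomputable def Rv : Sym2 (Fin n) → (Fin n → ℝ × ℝ) :=
  Sym2.lift ⟨rEdge, rEdge_symm⟩

theorem Rv_mk (u v : Fin n) : Rv s(u, v) = rEdge u v := rfl

theorem tcast_inj {a b : Fin n} (h : a ≠ b) : ((a : ℕ) : ℝ) ≠ ((b : ℕ) : ℝ) := by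
  intro hc
  exact h (Fin.val_injective (Nat.cast_injective hc))

theorem stress_identity (a b c d : Fin n) (hab : a ≠ b) (hac : a ≠ c) (had : a ≠ d)
    (hbc : b ≠ c) (hbd : b ≠ d) (hcd : c ≠ d) :
    ∃ la lb lc ld : ℝ, la * lb ≠ 0 ∧
      (la * lb) • Rv s(a,b) + ((la * lc) • Rv s(a,c) + (la * ld) • Rv s(a,d) +
        (lb * lc) • Rv s(b,c) + (lb * ld) • Rv s(b,d) + (lc * ld) • Rv s(c,d)) = 0 := by
  set ta := ((a : ℕ) : ℝ) with hta; set tb := ((b : ℕ) : ℝ) with htb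
  set tc := ((c : ℕ) : ℝ) with htc; set td := ((d : ℕ) : ℝ) with htd
  have h1 : ta ≠ tb := tcast_inj hab
  have h2 : ta ≠ tc := tcast_inj hac
  have h3 : ta ≠ td := tcast_inj had
  have h4 : tb ≠ tc := tcast_inj hbc
  have h5 : tb ≠ td := tcast_inj hbd
  have h6 : tc ≠ td := tcast_inj hcd
  refine ⟨-((tb-tc)*(tb-td)*(tc-td)), (ta-tc)*(ta-td)*(tc-td),
    -((ta-tb)*(ta-td)*(tb-td)), (ta-tb)*(ta-tc)*(tb-tc), ?_, ?_⟩
  · apply mul_ne_zero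
    · simp only [neg_ne_zero]
      exact mul_ne_zero (mul_ne_zero (sub_ne_zero.mpr h4) (sub_ne_zero.mpr h5))
        (sub_ne_zero.mpr h6)
    · exact mul_ne_zero (mul_ne_zero (sub_ne_zero.mpr h2) (sub_ne_zero.mpr h3))
        (sub_ne_zero.mpr h6)
  · funext w
    simp only [Rv_mk, Pi.add_apply, Pi.smul_apply, Pi.zero_apply, rEdge]
    by_cases hwa : w = a
    · subst hwa
      simp only [hab, hac, had, if_true, eq_self_iff_true, if_false]
      refine Prod.ext ?_ ?_ <;>
        simp [pt, ← hta, ← htb, ← htc, ← htd, Prod.ext_iff, smul_eq_mul] <;> ring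
    · by_cases hwb : w = b
      · subst hwb
        simp only [hwa, hbc, hbd, if_true, eq_self_iff_true, if_false]
        refine Prod.ext ?_ ?_ <;>
          simp [pt, ← hta, ← htb, ← htc, ← htd, Prod.ext_iff, smul_eq_mul] <;> ring
      · by_cases hwc : w = c
        · subst hwc
          simp only [hwa, hwb, hcd, if_true, eq_self_iff_true, if_false]
          refine Prod.ext ?_ ?_ <;>
            simp [pt, ← hta, ← htb, ← htc, ← htd, Prod.ext_iff, smul_eq_mul] <;> ring
        · by_cases hwd : w = d
          · subst hwd
            simp only [hwa, hwb, hwc, if_true, eq_self_iff_true, if_false]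
            refine Prod.ext ?_ ?_ <;>
              simp [pt, ← hta, ← htb, ← htc, ← htd, Prod.ext_iff, smul_eq_mul] <;> ring
          · simp [hwa, hwb, hwc, hwd]

end Rigidity

section Density
variable {n : ℕ}

theorem infd_span {E : Set (Sym2 (Fin n))} {e : Sym2 (Fin n)} (h : Infd E e) :
    Rv e ∈ Submodule.span ℝ (Rv '' E) := by
  induction h with
  | base he => exact Submodule.subset_span ⟨_, he, rfl⟩
  | step a b c d hab hac had hbc hbd hcd _ _ _ _ _ ih1 ih2 ih3 ih4 ih5 =>
    obtain ⟨la, lb, lc, ld, hne, hid⟩ := stress_identity a b c d hab hac had hbc hbd hcd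
    have heq : (la * lb) • Rv s(a,b) =
        -((la * lc) • Rv s(a,c) + (la * ld) • Rv s(a,d) +
          (lb * lc) • Rv s(b,c) + (lb * ld) • Rv s(b,d) + (lc * ld) • Rv s(c,d)) :=
      eq_neg_of_add_eq_zero_left hid
    have h2 : Rv s(a,b) = (la*lb)⁻¹ • -((la * lc) • Rv s(a,c) + (la * ld) • Rv s(a,d) +
          (lb * lc) • Rv s(b,c) + (lb * ld) • Rv s(b,d) + (lc * ld) • Rv s(c,d)) := by
      rw [← heq, inv_smul_smul₀ hne]
    rw [h2]
    apply Submodule.smul_mem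
    apply Submodule.neg_mem
    apply Submodule.add_mem
    apply Submodule.add_mem
    apply Submodule.add_mem
    apply Submodule.add_mem
    all_goals exact Submodule.smul_mem _ _ (by assumption)

theorem rEdge_eval_ne {u v w : Fin n} (h1 : w ≠ u) (h2 : w ≠ v) : rEdge u v w = 0 := by
  simp [rEdge, h1, h2]

theorem rEdge_eval_left (u v : Fin n) : rEdge u v u = pt u - pt v := by simp [rEdge]

theorem rEdge_eval_right {u v w : Fin n} (h1 : w ≠ u) (h2 : w = v) :
    rEdge u v w = pt v - pt u := by
  simp [rEdge, h1, h2]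
  intro h; exact absurd (h2.trans h) h1

open Classical in
theorem density_lemma (E : Finset (Sym2 (Fin n))) (S : Finset (Fin n))
    (hIS : ISp (↑E : Set (Sym2 (Fin n))) S) :
    2 * S.card - 3 ≤ (E.filter (fun e => ∀ x ∈ e, x ∈ S)).card := by
  by_cases hm : S.card < 2
  · have h0 : 2 * S.card - 3 = 0 := by omega
    rw [h0]; exact Nat.zero_le _
  push_neg at hm
  have hS : S.card = S.card := rfl
  set m := S.card with hmdef
  let v := S.orderIsoOfFin hS
  let vv : Fin m → Fin n := fun i => (v i : Fin n)
  have hvv : Function.Injective vv := fun i j hij => v.injective (Subtype.ext hij)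
  have hvvS : ∀ i, vv i ∈ S := fun i => (v i).2
  have hm2 : 2 ≤ m := hm
  let i0 : Fin m := ⟨0, by omega⟩
  let i1 : Fin m := ⟨1, by omega⟩
  let jdx : Fin (m - 2) → Fin m := fun j => ⟨j.1 + 2, by have := j.isLt; omega⟩
  have h01 : i0 ≠ i1 := by
    intro h; have := Fin.ext_iff.mp h; simp only [i0, i1] at this; omega
  have h0j : ∀ j, i0 ≠ jdx j := by
    intro j h; have := Fin.ext_iff.mp h; simp only [i0, jdx] at this; omega
  have h1j : ∀ j, i1 ≠ jdx j := by
    intro j h; have := Fin.ext_iff.mp h; simp only [i1, jdx] at this; omega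
  let g : (Fin (m-2) ⊕ Fin (m-2)) ⊕ Unit → (Fin n → ℝ × ℝ) := fun i =>
    match i with
    | .inl (.inl j) => Rv s(vv i0, vv (jdx j))
    | .inl (.inr j) => Rv s(vv i1, vv (jdx j))
    | .inr _ => Rv s(vv i0, vv i1)
  have hli : LinearIndependent ℝ g := by
    rw [Fintype.linearIndependent_iff]
    intro cf hform
    have hev : ∀ w : Fin n, (∑ j : Fin (m-2), cf (.inl (.inl j)) • Rv s(vv i0, vv (jdx j)) w)
        + (∑ j : Fin (m-2), cf (.inl (.inr j)) • Rv s(vv i1, vv (jdx j)) w)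
        + cf (.inr ()) • Rv s(vv i0, vv i1) w = 0 := by
      intro w
      have h := congrFun hform w
      rw [Finset.sum_apply] at h
      rw [Fintype.sum_sum_type, Fintype.sum_sum_type] at h
      simpa [Pi.smul_apply, Finset.sum_apply, Pi.add_apply, g] using h
    have hinl : ∀ (j : Fin (m-2)), cf (.inl (.inl j)) = 0 ∧ cf (.inl (.inr j)) = 0 := by
      intro j
      have hjdxinj : Function.Injective jdx := fun x y h => Fin.ext (by
        have := Fin.ext_iff.mp h; simp only [jdx] at this; omega)
      have hs1 : (∑ j' : Fin (m-2), cf (.inl (.inl j')) • Rv s(vv i0, vv (jdx j')) (vv (jdx j)))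
          = cf (.inl (.inl j)) • Rv s(vv i0, vv (jdx j)) (vv (jdx j)) :=
        Finset.sum_eq_single_of_mem j (Finset.mem_univ j) (fun j' _ hne => by
          rw [Rv_mk, rEdge_eval_ne (hvv.ne (fun h => (h0j j) h.symm))
            (hvv.ne (fun h => hne (hjdxinj h).symm)), smul_zero])
      have hs2 : (∑ j' : Fin (m-2), cf (.inl (.inr j')) • Rv s(vv i1, vv (jdx j')) (vv (jdx j)))
          = cf (.inl (.inr j)) • Rv s(vv i1, vv (jdx j)) (vv (jdx j)) :=
        Finset.sum_eq_single_of_mem j (Finset.mem_univ j) (fun j' _ hne => by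
          rw [Rv_mk, rEdge_eval_ne (hvv.ne (fun h => (h1j j) h.symm))
            (hvv.ne (fun h => hne (hjdxinj h).symm)), smul_zero])
      have hw := hev (vv (jdx j))
      rw [hs1, hs2] at hw
      rw [Rv_mk, Rv_mk, Rv_mk,
        rEdge_eval_right (fun h => (h0j j) (hvv h).symm) rfl,
        rEdge_eval_right (fun h => (h1j j) (hvv h).symm) rfl,
        rEdge_eval_ne (fun h => (h0j j) (hvv h).symm) (fun h => (h1j j) (hvv h).symm),
        smul_zero, add_zero] at hw
      set tw := ((vv (jdx j) : ℕ) : ℝ) with htw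
      set t0 := ((vv i0 : ℕ) : ℝ) with ht0
      set t1 := ((vv i1 : ℕ) : ℝ) with ht1
      have ht01 : t0 ≠ t1 := tcast_inj (hvv.ne h01)
      have htw0 : tw ≠ t0 := tcast_inj (hvv.ne (fun h => (h0j j) h.symm))
      have htw1 : tw ≠ t1 := tcast_inj (hvv.ne (fun h => (h1j j) h.symm))
      have e1 := congrArg Prod.fst hw
      have e2 := congrArg Prod.snd hw
      simp only [Prod.fst_add, Prod.snd_add, Prod.smul_fst, Prod.smul_snd, Prod.fst_sub,
        Prod.snd_sub, pt, Prod.fst_zero, Prod.snd_zero, smul_eq_mul] at e1 e2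
      constructor
      · have key : cf (.inl (.inl j)) * ((tw - t0)*(tw - t1)*(t1 - t0)) = 0 := by
          linear_combination (tw^2 - t1^2) * e1 - (tw - t1) * e2
        rcases mul_eq_zero.mp key with h | h
        · exact h
        · exact absurd h (by
            exact mul_ne_zero (mul_ne_zero (sub_ne_zero.mpr htw0) (sub_ne_zero.mpr htw1))
              (sub_ne_zero.mpr (Ne.symm ht01)))
      · have key : cf (.inl (.inr j)) * ((tw - t1)*(tw - t0)*(t0 - t1)) = 0 := by
          linear_combination (tw^2 - t0^2) * e1 - (tw - t0) * e2
        rcases mul_eq_zero.mp key with h | h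
        · exact h
        · exact absurd h (by
            exact mul_ne_zero (mul_ne_zero (sub_ne_zero.mpr htw1) (sub_ne_zero.mpr htw0))
              (sub_ne_zero.mpr ht01))
    have hinr : cf (.inr ()) = 0 := by
      have hz1 : (∑ j : Fin (m-2), cf (.inl (.inl j)) • Rv s(vv i0, vv (jdx j)) (vv i0)) = 0 :=
        Finset.sum_eq_zero (fun j _ => by rw [(hinl j).1, zero_smul])
      have hz2 : (∑ j : Fin (m-2), cf (.inl (.inr j)) • Rv s(vv i1, vv (jdx j)) (vv i0)) = 0 :=
        Finset.sum_eq_zero (fun j _ => by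
          rw [Rv_mk, rEdge_eval_ne (hvv.ne h01) (hvv.ne (h0j j)), smul_zero])
      have hw := hev (vv i0)
      rw [hz1, hz2, Rv_mk, rEdge_eval_left, zero_add, zero_add] at hw
      have e1 := congrArg Prod.fst hw
      simp only [Prod.smul_fst, Prod.fst_sub, pt, Prod.fst_zero, smul_eq_mul] at e1
      have ht01 : ((vv i0 : ℕ) : ℝ) ≠ ((vv i1 : ℕ) : ℝ) := tcast_inj (hvv.ne h01)
      rcases mul_eq_zero.mp e1 with h | h
      · exact h
      · exact absurd (sub_eq_zero.mp h) ht01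
    intro i
    rcases i with (j | j) | u
    · exact (hinl j).1
    · exact (hinl j).2
    · exact hinr
  -- rank chain
  have hrank := finrank_span_eq_card hli
  have hcardι : Fintype.card ((Fin (m-2) ⊕ Fin (m-2)) ⊕ Unit) = 2*m - 3 := by
    simp only [Fintype.card_sum, Fintype.card_fin, Fintype.card_unit]
    omega
  have hsub : Submodule.span ℝ (Set.range g) ≤
      Submodule.span ℝ (Rv '' (restrictE (↑E) S)) := by
    rw [Submodule.span_le]
    rintro _ ⟨i, rfl⟩
    have hmem : ∀ (x y : Fin n), x ∈ S → y ∈ S → x ≠ y →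
        Rv s(x, y) ∈ Submodule.span ℝ (Rv '' (restrictE (↑E) S)) := by
      intro x y hx hy hxy
      exact infd_span (hIS x hx y hy hxy)
    rcases i with (j | j) | u
    · exact hmem _ _ (hvvS i0) (hvvS (jdx j)) (hvv.ne (h0j j))
    · exact hmem _ _ (hvvS i1) (hvvS (jdx j)) (hvv.ne (h1j j))
    · exact hmem _ _ (hvvS i0) (hvvS i1) (hvv.ne h01)
  have hsetE : Rv '' (restrictE (↑E) S) =
      ↑((E.filter (fun e => ∀ x ∈ e, x ∈ S)).image Rv) := by
    rw [Finset.coe_image]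
    congr 1
    ext e
    simp [restrictE, Finset.mem_filter]
  have hfin : Module.finrank ℝ (Submodule.span ℝ (Set.range g)) ≤
      Module.finrank ℝ (Submodule.span ℝ (Rv '' (restrictE (↑E) S))) :=
    Submodule.finrank_mono hsub
  rw [hrank, hcardι] at hfin
  calc 2 * m - 3 ≤ Module.finrank ℝ (Submodule.span ℝ (Rv '' (restrictE (↑E) S))) := hfin
    _ ≤ (E.filter (fun e => ∀ x ∈ e, x ∈ S)).card := by
        rw [hsetE]
        exact le_trans (finrank_span_finset_le_card _) (Finset.card_image_le)

end Density

section Layer4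
variable {n : ℕ}

theorem merge_ISp {E : Set (Sym2 (Fin n))} {S T : Finset (Fin n)} {x y : Fin n}
    (hS : ISp E S) (hT : ISp E T) (hxS : x ∈ S) (hxT : x ∈ T) (hyS : y ∈ S)
    (hyT : y ∈ T) (hxy : x ≠ y) : ISp E (S ∪ T) :=
  merge_complete hxS hxT hyS hyT hxy
    (fun u hu v hv huv => (hS u hu v hv huv).mono (restrictE_mono Finset.subset_union_left))
    (fun u hu v hv huv => (hT u hu v hv huv).mono (restrictE_mono Finset.subset_union_right))

theorem pairs_within (S : Finset (Fin n)) :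
    ((⊤ : SimpleGraph (Fin n)).edgeFinset.filter (fun e => ∀ x ∈ e, x ∈ S)) =
      S.offDiag.image Sym2.mk.uncurry := by
  ext e
  induction e using Sym2.ind with
  | _ u v =>
    simp only [Finset.mem_filter, SimpleGraph.mem_edgeFinset, SimpleGraph.mem_edgeSet,
      SimpleGraph.top_adj, Finset.mem_image, Finset.mem_offDiag, Sym2.mem_iff]
    constructor
    · rintro ⟨huv, hmem⟩
      exact ⟨(u, v), ⟨hmem u (Or.inl rfl), hmem v (Or.inr rfl), huv⟩, rfl⟩
    · rintro ⟨⟨a, b⟩, ⟨ha, hb, hab⟩, heq⟩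
      rw [Function.uncurry_apply_pair, Sym2.eq_iff] at heq
      rcases heq with ⟨rfl, rfl⟩ | ⟨rfl, rfl⟩
      · exact ⟨hab, fun x hx => by rcases hx with rfl | rfl <;> assumption⟩
      · exact ⟨hab.symm, fun x hx => by rcases hx with rfl | rfl <;> assumption⟩

theorem card_pairs_top : (⊤ : SimpleGraph (Fin n)).edgeFinset.card = n.choose 2 := by
  have h := pairs_within (Finset.univ : Finset (Fin n))
  rw [Finset.filter_true_of_mem (fun e _ => by intro x _; exact Finset.mem_univ x)] at h
  rw [h, Sym2.card_image_offDiag, Finset.card_univ, Fintype.card_fin]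

open Classical in
theorem det_dichotomy (E : Finset (Sym2 (Fin n)))
    (hnd : ∀ e ∈ E, ¬ e.IsDiag) (L : ℕ) (hL : 3 ≤ L)
    (hperc : ∀ u v : Fin n, u ≠ v → Infd (↑E : Set (Sym2 (Fin n))) s(u,v)) :
    (∃ S : Finset (Fin n), L ≤ S.card ∧ S.card ≤ 5*L ∧
       2 * S.card - 3 ≤ (E.filter (fun e => ∀ x ∈ e, x ∈ S)).card) ∨
    (n.choose 2 ≤ 2 * L * E.card) := by
  by_cases hA : ∃ S : Finset (Fin n), ISp (↑E) S ∧ L ≤ S.card ∧ S.card ≤ 5*L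
  · obtain ⟨S, hIS, h1, h2⟩ := hA
    exact Or.inl ⟨S, h1, h2, density_lemma E S hIS⟩
  push_neg at hA
  have notA : ∀ S : Finset (Fin n), ISp (↑E) S → S.card ≤ 5*L → S.card < L := by
    intro S hIS hle
    by_contra h
    push_neg at h
    have := hA S hIS h
    omega
  right
  set ℱ : Finset (Finset (Fin n)) :=
    Finset.univ.powerset.filter
      (fun S => ISp (↑E : Set (Sym2 (Fin n))) S ∧ 2 ≤ S.card ∧ S.card < L) with hF
  have memF : ∀ S : Finset (Fin n), S ∈ ℱ ↔
      ISp (↑E : Set (Sym2 (Fin n))) S ∧ 2 ≤ S.card ∧ S.card < L := by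
    intro S
    simp [hF, Finset.mem_powerset, Finset.subset_univ]
  set maxs : Finset (Finset (Fin n)) :=
    ℱ.filter (fun M => ∀ T ∈ ℱ, M ⊆ T → M = T) with hM
  have extend : ∀ S ∈ ℱ, ∃ M ∈ maxs, S ⊆ M := by
    intro S hS
    have hne : (ℱ.filter (fun T => S ⊆ T)).Nonempty := ⟨S, by simp [hS]⟩
    obtain ⟨M, hMmem, hmax⟩ := Finset.exists_max_image _ Finset.card hne
    simp only [Finset.mem_filter] at hMmem
    refine ⟨M, ?_, hMmem.2⟩
    rw [hM, Finset.mem_filter]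
    refine ⟨hMmem.1, fun T hT hMT => ?_⟩
    have hTmem : T ∈ ℱ.filter (fun T => S ⊆ T) := by
      simp only [Finset.mem_filter]
      exact ⟨hT, hMmem.2.trans hMT⟩
    exact Finset.eq_of_subset_of_card_le hMT (hmax T hTmem)
  have cover : ∀ u v : Fin n, u ≠ v → ∃ M ∈ maxs, u ∈ M ∧ v ∈ M := by
    intro u v huv
    rcases witness_scale hnd L hL (hperc u v huv) with ⟨S, hIS, h1, h2⟩ | ⟨S, hIS, hm, h2, h3⟩
    · exact absurd h1 (Nat.not_le_of_lt (notA S hIS h2))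
    · have hSF : S ∈ ℱ := (memF S).mpr ⟨hIS, h2, h3⟩
      obtain ⟨M, hMm, hSM⟩ := extend S hSF
      exact ⟨M, hMm, hSM (hm u (Sym2.mem_mk_left u v)), hSM (hm v (Sym2.mem_mk_right u v))⟩
  have inter_small : ∀ M1 ∈ maxs, ∀ M2 ∈ maxs, M1 ≠ M2 → ∀ x y : Fin n,
      x ∈ M1 → x ∈ M2 → y ∈ M1 → y ∈ M2 → x ≠ y → False := by
    intro M1 hM1 M2 hM2 hne x y hx1 hx2 hy1 hy2 hxy
    rw [hM, Finset.mem_filter] at hM1 hM2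
    have hF1 := (memF M1).mp hM1.1
    have hF2 := (memF M2).mp hM2.1
    have hU : ISp (↑E : Set (Sym2 (Fin n))) (M1 ∪ M2) :=
      merge_ISp hF1.1 hF2.1 hx1 hx2 hy1 hy2 hxy
    have hcard : (M1 ∪ M2).card ≤ 5*L := by
      have := Finset.card_union_le M1 M2
      omega
    have hsmall : (M1 ∪ M2).card < L := notA _ hU hcard
    have hUF : M1 ∪ M2 ∈ ℱ := (memF _).mpr ⟨hU, by
      have := Finset.card_le_card (Finset.subset_union_left : M1 ⊆ M1 ∪ M2); omega, hsmall⟩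
    have e1 : M1 = M1 ∪ M2 := hM1.2 _ hUF Finset.subset_union_left
    have e2 : M2 = M1 ∪ M2 := hM2.2 _ hUF Finset.subset_union_right
    exact hne (e1.trans e2.symm)
  -- counting
  set pin : Finset (Fin n) → Finset (Sym2 (Fin n)) :=
    fun M => (⊤ : SimpleGraph (Fin n)).edgeFinset.filter (fun e => ∀ x ∈ e, x ∈ M) with hpin
  set einM : Finset (Fin n) → Finset (Sym2 (Fin n)) :=
    fun M => E.filter (fun e => ∀ x ∈ e, x ∈ M) with heinM
  have claim1 : (⊤ : SimpleGraph (Fin n)).edgeFinset ⊆ maxs.biUnion pin := by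
    intro e he
    induction e using Sym2.ind with
    | _ u v =>
      have huv : u ≠ v := by
        simpa [SimpleGraph.mem_edgeFinset, SimpleGraph.mem_edgeSet] using he
      obtain ⟨M, hMm, hu, hv⟩ := cover u v huv
      rw [Finset.mem_biUnion]
      refine ⟨M, hMm, ?_⟩
      rw [hpin, Finset.mem_filter]
      exact ⟨he, fun x hx => by rcases Sym2.mem_iff.mp hx with rfl | rfl <;> assumption⟩
  have disj : ∀ M1 ∈ maxs, ∀ M2 ∈ maxs, M1 ≠ M2 → Disjoint (einM M1) (einM M2) := by
    intro M1 h1 M2 h2 hne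
    rw [Finset.disjoint_left]
    intro e he1 he2
    rw [heinM, Finset.mem_filter] at he1 he2
    induction e using Sym2.ind with
    | _ u v =>
      have huv : u ≠ v := by
        have := hnd _ he1.1; rwa [Sym2.mk_isDiag_iff] at this
      exact inter_small M1 h1 M2 h2 hne u v
        (he1.2 u (Sym2.mem_mk_left u v)) (he2.2 u (Sym2.mem_mk_left u v))
        (he1.2 v (Sym2.mem_mk_right u v)) (he2.2 v (Sym2.mem_mk_right u v)) huv
  have step_per_M : ∀ M ∈ maxs, (pin M).card ≤ L * (einM M).card := by
    intro M hMm
    rw [hM, Finset.mem_filter] at hMm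
    have hF1 := (memF M).mp hMm.1
    have hc2 : 2 ≤ M.card := hF1.2.1
    have hcL : M.card < L := hF1.2.2
    have hpcard : (pin M).card = M.card.choose 2 := by
      rw [hpin]
      simp only
      rw [pairs_within, Sym2.card_image_offDiag]
    have hdens : 2 * M.card - 3 ≤ (einM M).card := density_lemma E M hF1.1
    have hkey : M.card.choose 2 ≤ L * (2 * M.card - 3) := by
      have h1 : M.card.choose 2 ≤ M.card * (M.card - 1) := by
        rw [Nat.choose_two_right]
        exact Nat.div_le_self _ _
      have h2 : M.card * (M.card - 1) ≤ L * (2 * M.card - 3) := by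
        rcases Nat.eq_or_lt_of_le hc2 with h | h
        · rw [← h]; omega
        · exact Nat.mul_le_mul (by omega) (by omega)
      omega
    calc (pin M).card = M.card.choose 2 := hpcard
      _ ≤ L * (2 * M.card - 3) := hkey
      _ ≤ L * (einM M).card := Nat.mul_le_mul_left L hdens
  calc n.choose 2 = (⊤ : SimpleGraph (Fin n)).edgeFinset.card := card_pairs_top.symm
    _ ≤ (maxs.biUnion pin).card := Finset.card_le_card claim1
    _ ≤ ∑ M ∈ maxs, (pin M).card := Finset.card_biUnion_le
    _ ≤ ∑ M ∈ maxs, L * (einM M).card := Finset.sum_le_sum step_per_M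
    _ = L * ∑ M ∈ maxs, (einM M).card := by rw [Finset.mul_sum]
    _ = L * (maxs.biUnion einM).card := by rw [Finset.card_biUnion disj]
    _ ≤ L * E.card := Nat.mul_le_mul_left L (Finset.card_le_card (by
        intro e he
        rw [Finset.mem_biUnion] at he
        obtain ⟨M, _, heM⟩ := he
        rw [heinM, Finset.mem_filter] at heM
        exact heM.1))
    _ ≤ 2 * L * E.card := by
        rw [mul_assoc]
        exact Nat.le_mul_of_pos_left _ (by omega)

end Layer4

section ProbCore
variable {α : Type*} [DecidableEq α]

theorem gnp_mass (U : Finset α) (p : ℝ) :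
    ∑ E ∈ U.powerset, p ^ E.card * (1-p) ^ (U.card - E.card) = 1 := by
  have h := Finset.prod_add (fun _ : α => p) (fun _ : α => (1:ℝ) - p) U
  simp only [Finset.prod_const] at h
  have h1 : (p + (1 - p)) = (1:ℝ) := by ring
  rw [h1, one_pow] at h
  calc ∑ E ∈ U.powerset, p ^ E.card * (1-p) ^ (U.card - E.card)
      = ∑ E ∈ U.powerset, p ^ E.card * (1-p) ^ ((U \ E).card) :=
        Finset.sum_congr rfl (fun t ht => by
          rw [Finset.card_sdiff_of_subset (Finset.mem_powerset.mp ht)])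
    _ = 1 := h.symm

theorem weight_nonneg {p : ℝ} (hp0 : 0 ≤ p) (hp1 : p ≤ 1) (m k : ℕ) :
    0 ≤ p ^ k * (1-p) ^ (m - k) :=
  mul_nonneg (pow_nonneg hp0 _) (pow_nonneg (by linarith) _)

theorem gnp_subset_prob (U : Finset α) (p : ℝ) (F : Finset α) (hF : F ⊆ U) :
    ∑ E ∈ U.powerset, p ^ E.card * (1-p) ^ (U.card - E.card) *
      (if F ⊆ E then (1:ℝ) else 0) = p ^ F.card := by
  classical
  have hstep : ∑ E ∈ U.powerset, p ^ E.card * (1-p) ^ (U.card - E.card) *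
      (if F ⊆ E then (1:ℝ) else 0)
      = ∑ E ∈ U.powerset.filter (fun E => F ⊆ E),
          p ^ E.card * (1-p) ^ (U.card - E.card) := by
    rw [Finset.sum_filter]
    apply Finset.sum_congr rfl
    intro E _
    split_ifs <;> simp
  rw [hstep]
  have hbij : ∑ E ∈ U.powerset.filter (fun E => F ⊆ E),
      p ^ E.card * (1-p) ^ (U.card - E.card)
      = ∑ D ∈ (U \ F).powerset,
          p ^ (D.card + F.card) * (1-p) ^ (U.card - (D.card + F.card)) := by
    apply Finset.sum_nbij' (fun E => E \ F) (fun D => D ∪ F)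
    · intro E hE
      rw [Finset.mem_filter, Finset.mem_powerset] at hE
      rw [Finset.mem_powerset]
      exact Finset.sdiff_subset_sdiff hE.1 (le_refl F)
    · intro D hD
      rw [Finset.mem_powerset] at hD
      rw [Finset.mem_filter, Finset.mem_powerset]
      exact ⟨Finset.union_subset (hD.trans (Finset.sdiff_subset)) hF,
        Finset.subset_union_right⟩
    · intro E hE
      rw [Finset.mem_filter] at hE
      exact Finset.sdiff_union_of_subset hE.2
    · intro D hD
      rw [Finset.mem_powerset] at hD
      have hdisj : Disjoint D F := Finset.disjoint_of_subset_left hD Finset.sdiff_disjoint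
      rw [Finset.union_sdiff_right, Finset.sdiff_eq_self_of_disjoint hdisj]
    · intro E hE
      rw [Finset.mem_filter] at hE
      have hcard : (E \ F).card + F.card = E.card := by
        rw [Finset.card_sdiff_of_subset hE.2]
        have := Finset.card_le_card hE.2
        omega
      rw [hcard]
  rw [hbij]
  have hsplit : ∀ D ∈ (U \ F).powerset,
      p ^ (D.card + F.card) * (1-p) ^ (U.card - (D.card + F.card))
      = p ^ F.card * (p ^ D.card * (1-p) ^ ((U \ F).card - D.card)) := by
    intro D hD
    rw [Finset.mem_powerset] at hD
    have h1 : (U \ F).card = U.card - F.card := Finset.card_sdiff_of_subset hF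
    have h2 : U.card - (D.card + F.card) = (U \ F).card - D.card := by
      have hFU := Finset.card_le_card hF
      have hDU := Finset.card_le_card hD
      omega
    rw [h2, pow_add]
    ring
  rw [Finset.sum_congr rfl hsplit, ← Finset.mul_sum, gnp_mass, mul_one]

theorem gnp_exp_card (U : Finset α) (p : ℝ) :
    ∑ E ∈ U.powerset, p ^ E.card * (1-p) ^ (U.card - E.card) * (E.card : ℝ)
      = (U.card : ℝ) * p := by
  classical
  have hcard : ∀ E ∈ U.powerset, (E.card : ℝ) = ∑ f ∈ U, (if f ∈ E then (1:ℝ) else 0) := by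
    intro E hE
    rw [Finset.mem_powerset] at hE
    rw [Finset.sum_boole, Finset.filter_mem_eq_inter, Finset.inter_eq_right.mpr hE]
  rw [Finset.sum_congr rfl (fun E hE => by rw [hcard E hE])]
  rw [Finset.sum_congr rfl (fun E _ => Finset.mul_sum _ _ _)]
  rw [Finset.sum_comm]
  have hper : ∀ f ∈ U, ∑ E ∈ U.powerset,
      p ^ E.card * (1-p) ^ (U.card - E.card) * (if f ∈ E then (1:ℝ) else 0) = p := by
    intro f hf
    have h := gnp_subset_prob U p {f} (Finset.singleton_subset_iff.mpr hf)
    rw [Finset.card_singleton, pow_one] at h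
    calc ∑ E ∈ U.powerset, p ^ E.card * (1-p) ^ (U.card - E.card) * (if f ∈ E then (1:ℝ) else 0)
        = ∑ E ∈ U.powerset, p ^ E.card * (1-p) ^ (U.card - E.card) *
            (if {f} ⊆ E then (1:ℝ) else 0) :=
          Finset.sum_congr rfl (fun E _ => by
            congr 1
            simp [Finset.singleton_subset_iff])
      _ = p := h
  rw [Finset.sum_congr rfl hper, Finset.sum_const, nsmul_eq_mul]

end ProbCore

section ProbSpec
variable {n : ℕ} {p : ℝ}

theorem gnpProb_nonneg (hp0 : 0 ≤ p) (hp1 : p ≤ 1) (A : Finset (Sym2 (Fin n)) → Prop) :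
    0 ≤ gnpProb n p A := by
  classical
  unfold gnpProb gnpExp
  dsimp only
  apply Finset.sum_nonneg
  intro E _
  apply mul_nonneg (weight_nonneg hp0 hp1 _ _)
  split_ifs <;> norm_num

theorem gnpProb_le_add (hp0 : 0 ≤ p) (hp1 : p ≤ 1)
    (A B C : Finset (Sym2 (Fin n)) → Prop)
    (h : ∀ E ∈ (⊤ : SimpleGraph (Fin n)).edgeFinset.powerset, A E → B E ∨ C E) :
    gnpProb n p A ≤ gnpProb n p B + gnpProb n p C := by
  classical
  unfold gnpProb gnpExp
  dsimp only
  rw [← Finset.sum_add_distrib]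
  apply Finset.sum_le_sum
  intro E hE
  have hw := weight_nonneg hp0 hp1
    ((⊤ : SimpleGraph (Fin n)).edgeFinset.card) (E.card)
  rw [← mul_add]
  apply mul_le_mul_of_nonneg_left _ hw
  by_cases hA : A E
  · rcases h E hE hA with h' | h'
    · rw [if_pos hA, if_pos h']
      split_ifs <;> norm_num
    · rw [if_pos hA, if_pos h']
      split_ifs <;> norm_num
  · rw [if_neg hA]
    split_ifs <;> norm_num

theorem gnpProb_union {ι : Type*} (hp0 : 0 ≤ p) (hp1 : p ≤ 1)
    (I : Finset ι) (A : Finset (Sym2 (Fin n)) → Prop) (B : ι → Finset (Sym2 (Fin n)) → Prop)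
    (h : ∀ E ∈ (⊤ : SimpleGraph (Fin n)).edgeFinset.powerset, A E → ∃ i ∈ I, B i E) :
    gnpProb n p A ≤ ∑ i ∈ I, gnpProb n p (B i) := by
  classical
  unfold gnpProb gnpExp
  dsimp only
  rw [Finset.sum_comm]
  apply Finset.sum_le_sum
  intro E hE
  have hw := weight_nonneg hp0 hp1
    ((⊤ : SimpleGraph (Fin n)).edgeFinset.card) (E.card)
  by_cases hA : A E
  · obtain ⟨i0, hi0, hBi0⟩ := h E hE hA
    calc (p ^ E.card * (1 - p) ^ ((⊤ : SimpleGraph (Fin n)).edgeFinset.card - E.card)) *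
          (if A E then (1:ℝ) else 0)
        = p ^ E.card * (1 - p) ^ ((⊤ : SimpleGraph (Fin n)).edgeFinset.card - E.card) *
          (if B i0 E then (1:ℝ) else 0) := by rw [if_pos hA, if_pos hBi0]
      _ ≤ ∑ i ∈ I, p ^ E.card *
            (1 - p) ^ ((⊤ : SimpleGraph (Fin n)).edgeFinset.card - E.card) *
            (if B i E then (1:ℝ) else 0) := by
          apply Finset.single_le_sum _ hi0
          intro i _
          apply mul_nonneg hw
          split_ifs <;> norm_num
  · rw [if_neg hA, mul_zero]
    apply Finset.sum_nonneg
    intro i _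
    apply mul_nonneg hw
    split_ifs <;> norm_num

theorem gnpProb_subset (F : Finset (Sym2 (Fin n)))
    (hF : F ⊆ (⊤ : SimpleGraph (Fin n)).edgeFinset) :
    gnpProb n p (fun E => F ⊆ E) = p ^ F.card := by
  classical
  unfold gnpProb gnpExp
  dsimp only
  rw [← gnp_subset_prob (⊤ : SimpleGraph (Fin n)).edgeFinset p F hF]
  apply Finset.sum_congr rfl
  intro E _
  by_cases hFE : F ⊆ E
  · rw [if_pos hFE, if_pos hFE]
  · rw [if_neg hFE, if_neg hFE]

theorem gnpProb_markov (hp0 : 0 ≤ p) (hp1 : p ≤ 1) {t : ℝ} (ht : 0 < t) :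
    gnpProb n p (fun E => t ≤ (E.card : ℝ)) ≤
      ((⊤ : SimpleGraph (Fin n)).edgeFinset.card : ℝ) * p / t := by
  classical
  unfold gnpProb gnpExp
  dsimp only
  have hstep : ∀ E ∈ (⊤ : SimpleGraph (Fin n)).edgeFinset.powerset,
      p ^ E.card * (1 - p) ^ ((⊤ : SimpleGraph (Fin n)).edgeFinset.card - E.card) *
        (if t ≤ (E.card : ℝ) then (1:ℝ) else 0)
      ≤ p ^ E.card * (1 - p) ^ ((⊤ : SimpleGraph (Fin n)).edgeFinset.card - E.card) *
          ((E.card : ℝ) / t) := by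
    intro E _
    apply mul_le_mul_of_nonneg_left _ (weight_nonneg hp0 hp1 _ _)
    split_ifs with hc
    · rw [le_div_iff₀ ht, one_mul]; exact hc
    · positivity
  calc ∑ E ∈ (⊤ : SimpleGraph (Fin n)).edgeFinset.powerset,
        p ^ E.card * (1 - p) ^ ((⊤ : SimpleGraph (Fin n)).edgeFinset.card - E.card) *
          (if t ≤ (E.card : ℝ) then (1:ℝ) else 0)
      ≤ ∑ E ∈ (⊤ : SimpleGraph (Fin n)).edgeFinset.powerset,
          p ^ E.card * (1 - p) ^ ((⊤ : SimpleGraph (Fin n)).edgeFinset.card - E.card) *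
            ((E.card : ℝ) / t) := Finset.sum_le_sum hstep
    _ = (∑ E ∈ (⊤ : SimpleGraph (Fin n)).edgeFinset.powerset,
          p ^ E.card * (1 - p) ^ ((⊤ : SimpleGraph (Fin n)).edgeFinset.card - E.card) *
            (E.card : ℝ)) / t := by
        rw [Finset.sum_div]
        exact Finset.sum_congr rfl (fun E _ => by rw [mul_div_assoc])
    _ = ((⊤ : SimpleGraph (Fin n)).edgeFinset.card : ℝ) * p / t := by
        rw [gnp_exp_card]

end ProbSpec

section Numerics

theorem exp_half_ge : (1.6487 : ℝ) ≤ Real.exp (1/2) := by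
  have h2 : Real.exp (1/2) * Real.exp (1/2) = Real.exp 1 := by
    rw [← Real.exp_add]; norm_num
  have hpos := Real.exp_pos (1/2 : ℝ)
  nlinarith [Real.exp_one_gt_d9]

theorem exp_neg_half_le : Real.exp (-(1/2)) ≤ 0.6066 := by
  rw [Real.exp_neg]
  rw [inv_le_comm₀ (Real.exp_pos _) (by norm_num)]
  calc (0.6066 : ℝ)⁻¹ ≤ 1.6487 := by norm_num
    _ ≤ Real.exp (1/2) := exp_half_ge

theorem exp_neg_one_le : Real.exp (-1) ≤ 0.3679 := by
  rw [Real.exp_neg]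
  rw [inv_le_comm₀ (Real.exp_pos _) (by norm_num)]
  calc (0.3679 : ℝ)⁻¹ ≤ 2.7182 := by norm_num
    _ ≤ Real.exp 1 := by nlinarith [Real.exp_one_gt_d9]

theorem exp_neg_three_half_le : Real.exp (-(3/2)) ≤ 0.2232 := by
  rw [Real.exp_neg]
  rw [inv_le_comm₀ (Real.exp_pos _) (by norm_num)]
  have h : Real.exp (3/2 : ℝ) = Real.exp 1 * Real.exp (1/2) := by
    rw [← Real.exp_add]; norm_num
  calc (0.2232 : ℝ)⁻¹ ≤ 4.4803 := by norm_num
    _ ≤ Real.exp 1 * Real.exp (1/2) := by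
        nlinarith [Real.exp_one_gt_d9, exp_half_ge, Real.exp_pos (1/2 : ℝ)]
    _ = Real.exp (3/2) := h.symm

theorem tangent_log (u x : ℝ) (hx : 0 < x) :
    Real.log x ≤ x * Real.exp (-u) - 1 + u := by
  have h := Real.log_le_sub_one_of_pos (show 0 < x * Real.exp (-u) by positivity)
  rw [Real.log_mul (ne_of_gt hx) (ne_of_gt (Real.exp_pos _)), Real.log_exp] at h
  linarith

/-- The key segment inequality. -/
theorem seg_ineq (x : ℝ) (h1 : 1 ≤ x) (h2 : x ≤ 5.005) :
    x * Real.log x ≤ 1.94 * x - 1.55 := by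
  have hx : 0 < x := by linarith
  rcases le_or_gt x 2.1 with hc1 | hc1
  · have ht := tangent_log (1/2) x hx
    have hb := exp_neg_half_le
    nlinarith [mul_nonneg (sub_nonneg.mpr h1) (sub_nonneg.mpr hc1),
      mul_pos hx hx, Real.exp_pos (-(1/2):ℝ), sq_nonneg (x - 1)]
  rcases le_or_gt x 3.5 with hc2 | hc2
  · have ht := tangent_log 1 x hx
    have hb := exp_neg_one_le
    nlinarith [mul_nonneg (sub_nonneg.mpr hc1.le) (sub_nonneg.mpr hc2),
      mul_pos hx hx, Real.exp_pos (-1 : ℝ)]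
  · have ht := tangent_log (3/2) x hx
    have hb := exp_neg_three_half_le
    nlinarith [mul_nonneg (sub_nonneg.mpr hc2.le) (sub_nonneg.mpr h2),
      mul_pos hx hx, Real.exp_pos (-(3/2) : ℝ)]

theorem pow_self_le_exp_mul_factorial : ∀ k : ℕ, (k:ℝ)^k ≤ Real.exp 1 ^ k * (k.factorial : ℝ)
  | 0 => by norm_num
  | (k+1) => by
    have ih := pow_self_le_exp_mul_factorial k
    have hstep : ((k+1:ℕ):ℝ)^k ≤ Real.exp 1 * (k:ℝ)^k := by
      rcases Nat.eq_zero_or_pos k with rfl | hk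
      · simpa using (by nlinarith [Real.exp_one_gt_d9] : (1:ℝ) ≤ Real.exp 1)
      · have hkR : (0:ℝ) < k := by exact_mod_cast hk
        have h1 : ((k+1:ℕ):ℝ) = (k:ℝ) * (1 + 1/(k:ℝ)) := by
          push_cast; field_simp
        have h2 : (1 + 1/(k:ℝ))^k ≤ Real.exp 1 := by
          have := Real.add_one_le_exp (1/(k:ℝ))
          calc (1 + 1/(k:ℝ))^k ≤ (Real.exp (1/(k:ℝ)))^k := by
                apply pow_le_pow_left₀ (by positivity) (by linarith)
            _ = Real.exp ((k:ℝ) * (1/(k:ℝ))) := by rw [← Real.exp_nat_mul]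
            _ = Real.exp 1 := by rw [mul_one_div, div_self (ne_of_gt hkR)]
        calc ((k+1:ℕ):ℝ)^k = (k:ℝ)^k * (1 + 1/(k:ℝ))^k := by rw [h1, mul_pow]
          _ ≤ (k:ℝ)^k * Real.exp 1 := by
              apply mul_le_mul_of_nonneg_left h2 (by positivity)
          _ = Real.exp 1 * (k:ℝ)^k := by ring
    have hfac : ((k+1).factorial : ℝ) = ((k+1:ℕ):ℝ) * (k.factorial : ℝ) := by
      rw [Nat.factorial_succ]; push_cast; ring
    have hk1 : (0:ℝ) ≤ ((k+1:ℕ):ℝ) := by positivity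
    calc ((k+1:ℕ):ℝ)^(k+1) = ((k+1:ℕ):ℝ) * ((k+1:ℕ):ℝ)^k := by ring
      _ ≤ ((k+1:ℕ):ℝ) * (Real.exp 1 * (k:ℝ)^k) := by
          apply mul_le_mul_of_nonneg_left hstep hk1
      _ ≤ ((k+1:ℕ):ℝ) * (Real.exp 1 * (Real.exp 1 ^ k * (k.factorial : ℝ))) := by
          apply mul_le_mul_of_nonneg_left _ hk1
          apply mul_le_mul_of_nonneg_left ih (Real.exp_pos 1).le
      _ = Real.exp 1 ^ (k+1) * ((k+1).factorial : ℝ) := by rw [hfac]; ring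

theorem choose_le_e_mul (m k : ℕ) (hk : 1 ≤ k) :
    (m.choose k : ℝ) ≤ (Real.exp 1 * m / k)^k := by
  have h1 : (m.choose k : ℝ) * (k.factorial : ℝ) ≤ (m:ℝ)^k := by
    have := Nat.descFactorial_le_pow m k
    have h2 : m.choose k * k.factorial = m.descFactorial k := by
      rw [Nat.descFactorial_eq_factorial_mul_choose]; ring
    calc (m.choose k : ℝ) * (k.factorial : ℝ) = (m.descFactorial k : ℝ) := by
          rw [← h2]; push_cast; ring
      _ ≤ (m:ℝ)^k := by exact_mod_cast this
  have hkpos : (0:ℝ) < (k:ℝ) := by exact_mod_cast hk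
  have hkk : (0:ℝ) < (k:ℝ)^k := by positivity
  have hfact : (0:ℝ) < (k.factorial : ℝ) := by exact_mod_cast k.factorial_pos
  have h3 : (m.choose k : ℝ) * (k:ℝ)^k ≤ (Real.exp 1 * m)^k := by
    calc (m.choose k : ℝ) * (k:ℝ)^k
        ≤ (m.choose k : ℝ) * (Real.exp 1 ^ k * (k.factorial : ℝ)) := by
          apply mul_le_mul_of_nonneg_left (pow_self_le_exp_mul_factorial k)
            (by positivity)
      _ = Real.exp 1 ^ k * ((m.choose k : ℝ) * (k.factorial : ℝ)) := by ring
      _ ≤ Real.exp 1 ^ k * (m:ℝ)^k := by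
          apply mul_le_mul_of_nonneg_left h1 (by positivity)
      _ = (Real.exp 1 * m)^k := by rw [mul_pow]
  rw [div_pow, le_div_iff₀ hkk]
  exact h3

end Numerics


section AuxIneq

theorem aux_e1sq {e1 : ℝ} (h : 2.718281828 < e1) : (7.389056:ℝ) ≤ e1^2 := by nlinarith

theorem aux_e1sq_ub {e1 : ℝ} (h0 : 0 < e1) (h : e1 < 2.7182818286) : e1^2 ≤ 7.3890562 := by
  nlinarith

theorem aux_choose2 {s : ℝ} (h : 0 ≤ s) : s * (s-1) / 2 ≤ s^2/2 := by nlinarith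

theorem aux_key {e1 s : ℝ} (he2 : (7.389056:ℝ) ≤ e1^2) (hs : (1000:ℝ) ≤ s) :
    4 * s^2 ≤ 0.1434 * e1^2 * (2*s-3)^2 := by
  have h1 : (1.997*s)^2 ≤ (2*s-3)^2 := pow_le_pow_left₀ (by linarith) (by linarith) 2
  have h2 : 0.1434 * 7.389056 * (1.997*s)^2 ≤ 0.1434 * e1^2 * (2*s-3)^2 :=
    mul_le_mul (mul_le_mul_of_nonneg_left he2 (by norm_num)) h1 (by positivity) (by positivity)
  nlinarith [sq_nonneg s]

theorem aux_chain {t s : ℝ} (h : t ≤ s) (hs : (1000:ℝ) ≤ s) (ht : 0 < t) :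
    t * (4*s-6) ≤ 4*s^2 := by nlinarith

theorem aux_selfsq {y : ℝ} (h : 1 ≤ y) : y ≤ y^2 := by nlinarith

theorem aux_e5 {e1 : ℝ} (h : 1 ≤ e1) : e1^5 ≤ (e1^3)^2 := by
  calc e1^5 = e1^5 * 1 := by ring
    _ ≤ e1^5 * e1 := by
        apply mul_le_mul_of_nonneg_left h (by positivity)
    _ = (e1^3)^2 := by ring

end AuxIneq

section NumericMain

set_option maxHeartbeats 1000000 in
theorem numeric_main (n s L : ℕ)
    (hlog : 1000 ≤ Real.log n)
    (hL1 : Real.log n ≤ (L:ℝ)) (hL2 : (L:ℝ) ≤ Real.log n + 1)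
    (hs1 : L ≤ s) (hs2 : s ≤ 5 * L) :
    (n.choose s : ℝ) * (((s.choose 2).choose (2*s-3)) : ℝ) *
      (4 / Real.sqrt (Real.exp 1 ^ 5 * n * Real.log n)) ^ (2*s-3)
    ≤ Real.exp 1 ^ 6 * Real.exp (-(Real.log n) / 20) := by
  set p0 : ℝ := 4 / Real.sqrt (Real.exp 1 ^ 5 * n * Real.log n) with hp0def
  have hlogpos : (0:ℝ) < Real.log n := by linarith
  have hn1 : (1:ℝ) < (n:ℝ) := by
    by_contra h
    push_neg at h
    have : Real.log n ≤ 0 := Real.log_nonpos (by positivity) h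
    linarith
  have hnpos : (0:ℝ) < (n:ℝ) := by linarith
  have hL1000 : 1000 ≤ L := by
    have : (1000:ℝ) ≤ (L:ℝ) := by linarith
    exact_mod_cast this
  have hs1000 : 1000 ≤ s := le_trans hL1000 hs1
  have hsR1000 : (1000:ℝ) ≤ (s:ℝ) := by exact_mod_cast hs1000
  have hspos : (0:ℝ) < (s:ℝ) := by linarith
  have hargpos : (0:ℝ) < Real.exp 1 ^ 5 * n * Real.log n := by positivity
  have hsqrtpos : (0:ℝ) < Real.sqrt (Real.exp 1 ^ 5 * n * Real.log n) :=
    Real.sqrt_pos.mpr hargpos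
  have hp0pos : 0 < p0 := by rw [hp0def]; positivity
  have hp0sq : p0^2 = 16 / (Real.exp 1 ^ 5 * n * Real.log n) := by
    rw [hp0def, div_pow, Real.sq_sqrt hargpos.le]
    norm_num
  set k : ℕ := 2*s - 3 with hkdef
  have hkR : (k:ℝ) = 2*(s:ℝ) - 3 := by
    rw [hkdef]
    have h3 : 3 ≤ 2*s := by omega
    push_cast [Nat.cast_sub h3]
    ring
  have hkpos : 1 ≤ k := by omega
  have hkRpos : (0:ℝ) < (k:ℝ) := by rw [hkR]; linarith
  set u : ℝ := Real.exp 1 * (s:ℝ)^2 * p0 / (2*(k:ℝ)) with hudef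
  have hupos : 0 < u := by
    rw [hudef]
    have := Real.exp_pos 1
    positivity
  set e1 : ℝ := Real.exp 1 with he1
  have he1pos : (0:ℝ) < e1 := Real.exp_pos 1
  have he1gt : (2.718281828:ℝ) < e1 := by
    rw [he1]; exact lt_trans (by norm_num) Real.exp_one_gt_d9
  have he1lt : e1 < 2.7182818286 := by rw [he1]; exact Real.exp_one_lt_d9
  have he2 : (7.389056:ℝ) ≤ e1^2 := aux_e1sq he1gt
  -- Step 1: choose bounds
  have hstep1 : (n.choose s : ℝ) ≤ (e1 * n / s)^s := choose_le_e_mul n s (by omega)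
  have hchoose2 : ((s.choose 2 : ℕ):ℝ) ≤ (s:ℝ)^2 / 2 := by
    rw [Nat.cast_choose_two]
    exact aux_choose2 hspos.le
  have hstep2 : (((s.choose 2).choose k) : ℝ) ≤ (e1 * ((s:ℝ)^2/2) / k)^k := by
    calc (((s.choose 2).choose k) : ℝ) ≤ (e1 * (s.choose 2) / k)^k :=
          choose_le_e_mul _ _ hkpos
      _ ≤ (e1 * ((s:ℝ)^2/2) / k)^k := by
          apply pow_le_pow_left₀ (by positivity)
          apply div_le_div_of_nonneg_right _ hkRpos.le
          exact mul_le_mul_of_nonneg_left hchoose2 he1pos.le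
  have hmid : (e1 * ((s:ℝ)^2/2) / k)^k * p0^k = u^k := by
    rw [hudef, ← mul_pow]
    congr 1
    field_simp
    try ring
  have hterm1 : (n.choose s : ℝ) * (((s.choose 2).choose k) : ℝ) * p0 ^ k
      ≤ (e1 * n / s)^s * u^k := by
    rw [← hmid]
    have hp0k : (0:ℝ) ≤ p0^k := by positivity
    calc (n.choose s : ℝ) * (((s.choose 2).choose k) : ℝ) * p0 ^ k
        ≤ (e1 * n / s)^s * (((s.choose 2).choose k) : ℝ) * p0 ^ k := by
          apply mul_le_mul_of_nonneg_right _ hp0k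
          exact mul_le_mul_of_nonneg_right hstep1 (Nat.cast_nonneg _)
      _ ≤ (e1 * n / s)^s * (e1 * ((s:ℝ)^2/2) / k)^k * p0 ^ k := by
          apply mul_le_mul_of_nonneg_right _ hp0k
          apply mul_le_mul_of_nonneg_left hstep2 (by positivity)
      _ = (e1 * n / s)^s * ((e1 * ((s:ℝ)^2/2) / k)^k * p0^k) := by ring
  have hk2s : k + 3 = 2*s := by omega
  have hukk : u^k = u^(2*s) / u^3 := by
    rw [eq_div_iff (by positivity), ← pow_add, hk2s]
  set A : ℝ := (e1 * n / s) * u^2 with hAdef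
  have hApos : 0 < A := by rw [hAdef]; positivity
  have hregroup : (e1 * n / s)^s * u^(2*s) = A^s := by
    rw [hAdef, mul_pow, pow_mul]
  have hAval : A = 4 * (s:ℝ)^3 / (e1^2 * (k:ℝ)^2 * Real.log n) := by
    rw [hAdef, hudef, div_pow, mul_pow, mul_pow, hp0sq]
    field_simp
    ring
  have hkRe : (k:ℝ)^2 = (2*(s:ℝ)-3)^2 := by rw [hkR]
  set x : ℝ := (s:ℝ) / Real.log n with hxdef
  have hAbound : A ≤ 0.1434 * x := by
    have hkey : 4 * (s:ℝ)^2 ≤ 0.1434 * e1^2 * (k:ℝ)^2 := by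
      rw [hkRe]
      exact aux_key he2 hsR1000
    rw [hAval, hxdef, mul_div_assoc']
    rw [div_le_div_iff₀ (by positivity) hlogpos]
    have h3 := mul_le_mul_of_nonneg_right hkey (mul_nonneg hspos.le hlogpos.le)
    calc 4*(s:ℝ)^3*Real.log n = 4*(s:ℝ)^2*((s:ℝ)*Real.log n) := by ring
      _ ≤ 0.1434*e1^2*(k:ℝ)^2*((s:ℝ)*Real.log n) := h3
      _ = 0.1434*(s:ℝ)*(e1^2*(k:ℝ)^2*Real.log n) := by ring
  have hx1 : 1 ≤ x := by
    rw [hxdef, le_div_iff₀ hlogpos, one_mul]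
    calc Real.log n ≤ (L:ℝ) := hL1
      _ ≤ (s:ℝ) := by exact_mod_cast hs1
  have hx2 : x ≤ 5.005 := by
    rw [hxdef, div_le_iff₀ hlogpos]
    have h5L : (s:ℝ) ≤ 5*(L:ℝ) := by exact_mod_cast hs2
    have h3 : (5:ℝ) ≤ 0.005 * Real.log n := by linarith
    linarith
  have hxpos : 0 < x := by linarith
  have hconst : Real.log 0.1434 ≤ -1.94 := by
    rw [show (-1.94:ℝ) = -(1.94:ℝ) by norm_num]
    rw [Real.log_le_iff_le_exp (by norm_num)]
    have h1 : Real.exp (-(1.94:ℝ)) = Real.exp 0.06 / Real.exp 2 := by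
      rw [← Real.exp_sub]; norm_num
    have h2 : (1.06:ℝ) ≤ Real.exp 0.06 := by
      have := Real.add_one_le_exp (0.06:ℝ); linarith
    have h3 : Real.exp 2 ≤ 7.3890562 := by
      have h4 : Real.exp 2 = e1^2 := by rw [he1, ← Real.exp_nat_mul]; norm_num
      rw [h4]
      exact aux_e1sq_ub he1pos he1lt
    rw [h1]
    rw [le_div_iff₀ (Real.exp_pos 2)]
    linarith
  have hAs : A^s ≤ Real.exp (-(1.55) * Real.log n) := by
    calc A^s ≤ (0.1434 * x)^s := pow_le_pow_left₀ hApos.le hAbound s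
      _ = Real.exp ((s:ℝ) * Real.log (0.1434 * x)) := by
          conv_lhs => rw [← Real.exp_log (show (0:ℝ) < 0.1434 * x by positivity)]
          rw [← Real.exp_nat_mul]
      _ ≤ Real.exp (-(1.55) * Real.log n) := by
          apply Real.exp_le_exp.mpr
          have hlogsplit : Real.log (0.1434 * x) = Real.log 0.1434 + Real.log x :=
            Real.log_mul (by norm_num) (ne_of_gt hxpos)
          have h1 : (s:ℝ) * Real.log (0.1434 * x) ≤ (s:ℝ) * (Real.log x - 1.94) := by
            apply mul_le_mul_of_nonneg_left _ hspos.le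
            rw [hlogsplit]
            linarith
          have hseq : (s:ℝ) = x * Real.log n := by
            rw [hxdef, div_mul_cancel₀ _ (ne_of_gt hlogpos)]
          have h3 : x * Real.log x - 1.94 * x ≤ -1.55 := by
            have := seg_ineq x hx1 hx2
            linarith
          calc (s:ℝ) * Real.log (0.1434 * x) ≤ (s:ℝ) * (Real.log x - 1.94) := h1
            _ = Real.log n * (x * Real.log x - 1.94 * x) := by rw [hseq]; ring
            _ ≤ Real.log n * (-1.55) := mul_le_mul_of_nonneg_left h3 hlogpos.le
            _ = -(1.55) * Real.log n := by ring
  -- lower bound for u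
  have hls : Real.log n ≤ (s:ℝ) := by
    calc Real.log n ≤ (L:ℝ) := hL1
      _ ≤ (s:ℝ) := by exact_mod_cast hs1
  have hu_lb : e1 * Real.log n * p0 / 4 ≤ u := by
    rw [hudef, div_le_div_iff₀ (by norm_num) (by positivity)]
    have hchain : Real.log n * (4*(s:ℝ)-6) ≤ 4*(s:ℝ)^2 := aux_chain hls hsR1000 hlogpos
    have hfin := mul_le_mul_of_nonneg_left hchain (mul_nonneg he1pos.le hp0pos.le)
    calc e1 * Real.log n * p0 * (2*(k:ℝ))
        = (e1 * p0) * (Real.log n * (4*(s:ℝ)-6)) := by rw [hkR]; ring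
      _ ≤ (e1 * p0) * (4*(s:ℝ)^2) := hfin
      _ = e1 * (s:ℝ)^2 * p0 * 4 := by ring
  -- sqrt expansion
  have hsqrtn : Real.sqrt (n:ℝ) = Real.exp (Real.log n / 2) := by
    have h : (n:ℝ) = Real.exp (Real.log n / 2) ^ 2 := by
      calc (n:ℝ) = Real.exp (Real.log n) := (Real.exp_log hnpos).symm
        _ = Real.exp ((2:ℕ) * (Real.log n / 2)) := by
            congr 1; push_cast; ring
        _ = Real.exp (Real.log n / 2) ^ (2:ℕ) := Real.exp_nat_mul _ 2
    conv_lhs => rw [h]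
    rw [Real.sqrt_sq (Real.exp_pos _).le]
  have hsqrtlog : Real.sqrt (Real.log n) ≤ Real.log n := by
    calc Real.sqrt (Real.log n) ≤ Real.sqrt ((Real.log n)^2) := by
          apply Real.sqrt_le_sqrt; exact aux_selfsq (by linarith)
      _ = Real.log n := Real.sqrt_sq hlogpos.le
  have hsqrte : Real.sqrt (e1^5) ≤ e1^3 := by
    calc Real.sqrt (e1^5) ≤ Real.sqrt ((e1^3)^2) := by
          apply Real.sqrt_le_sqrt; exact aux_e5 (by linarith)
      _ = e1^3 := Real.sqrt_sq (by positivity)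
  have hsqrt_split : Real.sqrt (e1 ^ 5 * n * Real.log n) ≤
      e1^3 * Real.exp (Real.log n / 2) * Real.log n := by
    calc Real.sqrt (e1 ^ 5 * n * Real.log n)
        = Real.sqrt (e1^5) * Real.sqrt (n:ℝ) * Real.sqrt (Real.log n) := by
          rw [Real.sqrt_mul (by positivity), Real.sqrt_mul (by positivity)]
      _ ≤ e1^3 * Real.exp (Real.log n / 2) * Real.log n := by
          rw [hsqrtn]
          have h1 : Real.sqrt (e1^5) * Real.exp (Real.log n / 2) ≤
              e1^3 * Real.exp (Real.log n / 2) :=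
            mul_le_mul_of_nonneg_right hsqrte (Real.exp_pos _).le
          have h2 : (0:ℝ) ≤ Real.sqrt (e1^5) * Real.exp (Real.log n / 2) := by positivity
          calc Real.sqrt (e1^5) * Real.exp (Real.log n / 2) * Real.sqrt (Real.log n)
              ≤ Real.sqrt (e1^5) * Real.exp (Real.log n / 2) * Real.log n :=
                mul_le_mul_of_nonneg_left hsqrtlog h2
            _ ≤ e1^3 * Real.exp (Real.log n / 2) * Real.log n :=
                mul_le_mul_of_nonneg_right h1 hlogpos.le
  -- 1/u^3 bound
  have hw_eq : e1 * Real.log n * p0 / 4 =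
      e1 * Real.log n / Real.sqrt (e1 ^ 5 * n * Real.log n) := by
    rw [hp0def]
    field_simp
  have hums : e1 * Real.log n / Real.sqrt (e1 ^ 5 * n * Real.log n) ≤ u := by
    rw [← hw_eq]; exact hu_lb
  have hinv2 : 1 / u^3 ≤
      (e1^3 * Real.exp (Real.log n / 2) * Real.log n)^3 / (e1^3 * (Real.log n)^3) := by
    have hwpos : (0:ℝ) < e1 * Real.log n / Real.sqrt (e1 ^ 5 * n * Real.log n) := by
      positivity
    have h1 : 1/u^3 ≤ 1/(e1 * Real.log n / Real.sqrt (e1 ^ 5 * n * Real.log n))^3 :=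
      one_div_le_one_div_of_le (by positivity) (pow_le_pow_left₀ hwpos.le hums 3)
    have h2 : 1/(e1 * Real.log n / Real.sqrt (e1 ^ 5 * n * Real.log n))^3
        = Real.sqrt (e1 ^ 5 * n * Real.log n)^3 / (e1^3 * (Real.log n)^3) := by
      rw [div_pow, one_div_div, mul_pow]
    have h3 : Real.sqrt (e1 ^ 5 * n * Real.log n)^3 / (e1^3 * (Real.log n)^3)
        ≤ (e1^3 * Real.exp (Real.log n / 2) * Real.log n)^3 / (e1^3 * (Real.log n)^3) := by
      apply div_le_div_of_nonneg_right _ (by positivity : (0:ℝ) ≤ e1^3 * (Real.log n)^3)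
      exact pow_le_pow_left₀ (Real.sqrt_nonneg _) hsqrt_split 3
    calc 1/u^3 ≤ 1/(e1 * Real.log n / Real.sqrt (e1 ^ 5 * n * Real.log n))^3 := h1
      _ = Real.sqrt (e1 ^ 5 * n * Real.log n)^3 / (e1^3 * (Real.log n)^3) := h2
      _ ≤ (e1^3 * Real.exp (Real.log n / 2) * Real.log n)^3 / (e1^3 * (Real.log n)^3) := h3
  -- final combination
  have hfinal : (e1 * n / s)^s * u^k ≤ e1^6 * Real.exp (-(Real.log n) / 20) := by
    have hexp3 : Real.exp (Real.log n / 2) ^ (3:ℕ) = Real.exp ((3:ℕ) * (Real.log n / 2)) :=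
      (Real.exp_nat_mul _ 3).symm
    calc (e1 * n / s)^s * u^k
        = ((e1 * n / s)^s * u^(2*s)) * (1/u^3) := by rw [hukk]; ring
      _ = A^s * (1/u^3) := by rw [hregroup]
      _ ≤ Real.exp (-(1.55) * Real.log n) * (1/u^3) := by
          apply mul_le_mul_of_nonneg_right hAs (by positivity)
      _ ≤ Real.exp (-(1.55) * Real.log n) *
            ((e1^3 * Real.exp (Real.log n / 2) * Real.log n)^3 / (e1^3 * (Real.log n)^3)) := by
          apply mul_le_mul_of_nonneg_left hinv2 (Real.exp_pos _).le
      _ = e1^6 * (Real.exp (-(1.55) * Real.log n) * Real.exp ((3:ℕ) * (Real.log n / 2))) := by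
          rw [← hexp3]
          field_simp
      _ = e1^6 * Real.exp (-(Real.log n) / 20) := by
          rw [← Real.exp_add]
          congr 1
          push_cast
          ring
  calc (n.choose s : ℝ) * (((s.choose 2).choose (2*s-3)) : ℝ) * p0 ^ (2*s-3)
      = (n.choose s : ℝ) * (((s.choose 2).choose k) : ℝ) * p0 ^ k := by rw [hkdef]
    _ ≤ (e1 * n / s)^s * u^k := hterm1
    _ ≤ e1^6 * Real.exp (-(Real.log n) / 20) := hfinal

end NumericMain

-- Layer 7 snippets to insert (tested standalone appended to full.lean pieces)
section Assembly
variable {n : ℕ} {p : ℝ}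

theorem gnpProb_mono (hp0 : 0 ≤ p) (hp1 : p ≤ 1)
    (A B : Finset (Sym2 (Fin n)) → Prop)
    (h : ∀ E ∈ (⊤ : SimpleGraph (Fin n)).edgeFinset.powerset, A E → B E) :
    gnpProb n p A ≤ gnpProb n p B := by
  classical
  unfold gnpProb gnpExp
  dsimp only
  apply Finset.sum_le_sum
  intro E hE
  have hw := weight_nonneg hp0 hp1 ((⊤ : SimpleGraph (Fin n)).edgeFinset.card) (E.card)
  apply mul_le_mul_of_nonneg_left _ hw
  by_cases hA : A E
  · rw [if_pos hA, if_pos (h E hE hA)]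
  · rw [if_neg hA]
    split_ifs <;> norm_num

open Classical in
theorem prob_bound (hp : p ∈ Set.Ioo (0:ℝ) 1)
    (hb : p^2 * n * Real.log n ≤ 16 / Real.exp 1 ^ 5)
    (hlog : 1000 ≤ Real.log n) :
    gnpProb n p (fun E => Percolates (SimpleGraph.completeGraph (Fin 4)) (↑E : Set (Sym2 (Fin n))))
    ≤ 13 * Real.exp 1 ^ 6 * ((Real.log n + 1) * Real.exp (-(Real.log n) / 20)) := by
  obtain ⟨hp0, hp1⟩ := hp
  have hlogpos : (0:ℝ) < Real.log n := by linarith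
  have hn1 : (1:ℝ) < (n:ℝ) := by
    by_contra h
    push_neg at h
    have : Real.log n ≤ 0 := Real.log_nonpos (by positivity) h
    linarith
  have hnpos : (0:ℝ) < (n:ℝ) := by linarith
  have hn2 : 2 ≤ n := by
    by_contra h
    push_neg at h
    interval_cases n <;> simp_all <;> norm_num at hn1
  set L : ℕ := ⌈Real.log n⌉₊ with hLdef
  have hL1 : Real.log n ≤ (L:ℝ) := Nat.le_ceil _
  have hL2 : (L:ℝ) ≤ Real.log n + 1 := (Nat.ceil_lt_add_one hlogpos.le).le
  have hL1000 : 1000 ≤ L := by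
    have : (1000:ℝ) ≤ (L:ℝ) := by linarith
    exact_mod_cast this
  have hL3 : 3 ≤ L := by omega
  have hLpos : (0:ℝ) < (L:ℝ) := by
    have : 0 < L := by omega
    exact_mod_cast this
  set p0 : ℝ := 4 / Real.sqrt (Real.exp 1 ^ 5 * n * Real.log n) with hp0def
  have hargpos : (0:ℝ) < Real.exp 1 ^ 5 * n * Real.log n := by positivity
  have hp0pos : 0 < p0 := by rw [hp0def]; positivity
  have hp0sq : p0^2 = 16 / (Real.exp 1 ^ 5 * n * Real.log n) := by
    rw [hp0def, div_pow, Real.sq_sqrt hargpos.le]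
    norm_num
  have hple : p ≤ p0 := by
    have h1 : p^2 ≤ p0^2 := by
      rw [hp0sq, le_div_iff₀ hargpos]
      calc p^2 * (Real.exp 1 ^ 5 * n * Real.log n)
          = (p^2 * n * Real.log n) * Real.exp 1 ^ 5 := by ring
        _ ≤ (16 / Real.exp 1 ^ 5) * Real.exp 1 ^ 5 := by
            apply mul_le_mul_of_nonneg_right hb (by positivity)
        _ = 16 := by field_simp
    calc p = Real.sqrt (p^2) := (Real.sqrt_sq hp0.le).symm
      _ ≤ Real.sqrt (p0^2) := Real.sqrt_le_sqrt h1
      _ = p0 := Real.sqrt_sq hp0pos.le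
  -- events
  set EvA : Finset (Sym2 (Fin n)) → Prop := fun E => ∃ S : Finset (Fin n),
    L ≤ S.card ∧ S.card ≤ 5*L ∧
      2 * S.card - 3 ≤ (E.filter (fun e => ∀ x ∈ e, x ∈ S)).card with hEvA
  set EvB : Finset (Sym2 (Fin n)) → Prop := fun E => n.choose 2 ≤ 2 * L * E.card with hEvB
  have himp : ∀ E ∈ (⊤ : SimpleGraph (Fin n)).edgeFinset.powerset,
      Percolates (SimpleGraph.completeGraph (Fin 4)) (↑E : Set (Sym2 (Fin n))) → EvA E ∨ EvB E := by
    intro E hE hperc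
    have hEsub : E ⊆ (⊤ : SimpleGraph (Fin n)).edgeFinset := Finset.mem_powerset.mp hE
    have hnd : ∀ e ∈ (↑E : Set (Sym2 (Fin n))), ¬ e.IsDiag := by
      intro e he
      have : e ∈ (⊤ : SimpleGraph (Fin n)).edgeFinset := hEsub he
      rw [SimpleGraph.mem_edgeFinset, SimpleGraph.edgeSet_top] at this
      exact this
    have hinf : ∀ u v : Fin n, u ≠ v → Infd (↑E : Set (Sym2 (Fin n))) s(u,v) :=
      fun u v huv => percolates_inf hperc huv
    exact det_dichotomy E hnd L hL3 hinf
  have hsplit := gnpProb_le_add hp0.le hp1.le _ EvA EvB himp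
  -- bound for EvB
  have htpos : (0:ℝ) < (n.choose 2 : ℝ) / (2*(L:ℝ)) := by
    have h1 : 0 < n.choose 2 := Nat.choose_pos (by omega)
    have h2 : (0:ℝ) < (n.choose 2 : ℝ) := by exact_mod_cast h1
    positivity
  have hBmono : gnpProb n p EvB ≤
      gnpProb n p (fun E => (n.choose 2 : ℝ) / (2*(L:ℝ)) ≤ (E.card : ℝ)) := by
    apply gnpProb_mono hp0.le hp1.le
    intro E _ hEvBE
    rw [div_le_iff₀ (by positivity)]
    have : (n.choose 2 : ℝ) ≤ ((2 * L * E.card : ℕ) : ℝ) := by exact_mod_cast hEvBE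
    push_cast at this
    linarith
  have hBmarkov := gnpProb_markov (n := n) (p := p) hp0.le hp1.le htpos
  have hBval : ((⊤ : SimpleGraph (Fin n)).edgeFinset.card : ℝ) * p /
      ((n.choose 2 : ℝ) / (2*(L:ℝ))) = 2 * (L:ℝ) * p := by
    rw [card_pairs_top]
    have h2 : (0:ℝ) < (n.choose 2 : ℝ) := by
      exact_mod_cast Nat.choose_pos (show 2 ≤ n by omega)
    field_simp
  have hBfinal : gnpProb n p EvB ≤ 8 * (Real.log n + 1) * Real.exp (-(Real.log n) / 20) := by
    have h1 : gnpProb n p EvB ≤ 2 * (L:ℝ) * p := by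
      calc gnpProb n p EvB ≤ _ := hBmono
        _ ≤ _ := hBmarkov
        _ = 2 * (L:ℝ) * p := hBval
    have h2 : 2 * (L:ℝ) * p ≤ 2 * (Real.log n + 1) * p0 := by
      apply mul_le_mul (by linarith) hple hp0.le (by linarith)
    have hsqrtn : Real.sqrt (n:ℝ) = Real.exp (Real.log n / 2) := by
      have h : (n:ℝ) = Real.exp (Real.log n / 2) ^ 2 := by
        calc (n:ℝ) = Real.exp (Real.log n) := (Real.exp_log hnpos).symm
          _ = Real.exp ((2:ℕ) * (Real.log n / 2)) := by congr 1; push_cast; ring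
          _ = Real.exp (Real.log n / 2) ^ (2:ℕ) := Real.exp_nat_mul _ 2
      conv_lhs => rw [h]
      rw [Real.sqrt_sq (Real.exp_pos _).le]
    have h3 : p0 ≤ 4 * Real.exp (-(Real.log n) / 2) := by
      rw [hp0def]
      have h4 : Real.sqrt (n:ℝ) ≤ Real.sqrt (Real.exp 1 ^ 5 * n * Real.log n) := by
        apply Real.sqrt_le_sqrt
        have h1e : (1:ℝ) ≤ Real.exp 1 := by linarith [Real.exp_one_gt_d9]
        have he1 : (1:ℝ) ≤ Real.exp 1 ^ 5 := by
          calc (1:ℝ) = 1^5 := by norm_num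
            _ ≤ (Real.exp 1)^5 := pow_le_pow_left₀ (by norm_num) h1e 5
        have hfac : (1:ℝ) ≤ Real.exp 1 ^ 5 * Real.log n := by nlinarith
        nlinarith [mul_le_mul_of_nonneg_right hfac hnpos.le]
      have h5 : Real.exp (Real.log n / 2) ≤ Real.sqrt (Real.exp 1 ^ 5 * n * Real.log n) := by
        rw [← hsqrtn]; exact h4
      rw [div_le_iff₀ (by positivity)]
      have h6 : Real.exp (-(Real.log n) / 2) * Real.exp (Real.log n / 2) = 1 := by
        rw [← Real.exp_add, show -(Real.log (n:ℝ))/2 + Real.log (n:ℝ)/2 = 0 by ring,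
          Real.exp_zero]
      calc (4:ℝ) = 4 * (Real.exp (-(Real.log n) / 2) * Real.exp (Real.log n / 2)) := by
            rw [h6]; ring
        _ ≤ 4 * (Real.exp (-(Real.log n) / 2) * Real.sqrt (Real.exp 1 ^ 5 * n * Real.log n)) := by
            apply mul_le_mul_of_nonneg_left _ (by norm_num)
            apply mul_le_mul_of_nonneg_left h5 (Real.exp_pos _).le
        _ = 4 * Real.exp (-(Real.log n) / 2) * Real.sqrt (Real.exp 1 ^ 5 * n * Real.log n) := by
            ring
    have h7 : Real.exp (-(Real.log n) / 2) ≤ Real.exp (-(Real.log n) / 20) := by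
      apply Real.exp_le_exp.mpr
      have : (0:ℝ) ≤ Real.log n := hlogpos.le
      linarith
    calc gnpProb n p EvB ≤ 2 * (Real.log n + 1) * p0 := le_trans h1 h2
      _ ≤ 2 * (Real.log n + 1) * (4 * Real.exp (-(Real.log n) / 2)) := by
          apply mul_le_mul_of_nonneg_left h3 (by positivity)
      _ = 8 * (Real.log n + 1) * Real.exp (-(Real.log n) / 2) := by ring
      _ ≤ 8 * (Real.log n + 1) * Real.exp (-(Real.log n) / 20) := by
          apply mul_le_mul_of_nonneg_left h7 (by positivity)
  -- bound for EvA
  set pin : Finset (Fin n) → Finset (Sym2 (Fin n)) :=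
    fun S => (⊤ : SimpleGraph (Fin n)).edgeFinset.filter (fun e => ∀ x ∈ e, x ∈ S) with hpin
  set SS : Finset (Finset (Fin n)) :=
    Finset.univ.powerset.filter (fun S => L ≤ S.card ∧ S.card ≤ 5*L) with hSSdef
  have hlev1 : gnpProb n p EvA ≤ ∑ S ∈ SS, gnpProb n p
      (fun E => 2 * S.card - 3 ≤ (E.filter (fun e => ∀ x ∈ e, x ∈ S)).card) := by
    apply gnpProb_union hp0.le hp1.le
    intro E _ hA
    obtain ⟨S, h1, h2, h3⟩ := hA
    refine ⟨S, ?_, h3⟩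
    rw [hSSdef, Finset.mem_filter]
    exact ⟨Finset.mem_powerset.mpr (Finset.subset_univ S), h1, h2⟩
  have hlev2 : ∀ S ∈ SS, gnpProb n p
      (fun E => 2 * S.card - 3 ≤ (E.filter (fun e => ∀ x ∈ e, x ∈ S)).card)
      ≤ ((S.card.choose 2).choose (2*S.card-3) : ℝ) * p0 ^ (2*S.card-3) := by
    intro S hS
    have hpincard : (pin S).card = S.card.choose 2 := by
      rw [hpin]
      simp only
      rw [pairs_within, Sym2.card_image_offDiag]
    have hstep : gnpProb n p
        (fun E => 2 * S.card - 3 ≤ (E.filter (fun e => ∀ x ∈ e, x ∈ S)).card)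
        ≤ ∑ F ∈ (pin S).powersetCard (2*S.card-3), gnpProb n p (fun E => F ⊆ E) := by
      apply gnpProb_union hp0.le hp1.le
      intro E hE hcard
      obtain ⟨F, hFsub, hFcard⟩ := Finset.exists_subset_card_eq hcard
      refine ⟨F, ?_, fun f hf => (Finset.mem_filter.mp (hFsub hf)).1⟩
      rw [Finset.mem_powersetCard]
      constructor
      · intro f hf
        have h1 := Finset.mem_filter.mp (hFsub hf)
        rw [hpin, Finset.mem_filter]
        exact ⟨Finset.mem_powerset.mp hE h1.1, h1.2⟩
      · exact hFcard
    have heval : ∀ F ∈ (pin S).powersetCard (2*S.card-3),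
        gnpProb n p (fun E => F ⊆ E) = p ^ (2*S.card-3) := by
      intro F hF
      rw [Finset.mem_powersetCard] at hF
      have hFsub : F ⊆ (⊤ : SimpleGraph (Fin n)).edgeFinset := by
        intro f hf
        have := hF.1 hf
        rw [hpin, Finset.mem_filter] at this
        exact this.1
      rw [gnpProb_subset F hFsub, hF.2]
    calc gnpProb n p (fun E => 2 * S.card - 3 ≤ (E.filter (fun e => ∀ x ∈ e, x ∈ S)).card)
        ≤ ∑ F ∈ (pin S).powersetCard (2*S.card-3), gnpProb n p (fun E => F ⊆ E) := hstep
      _ = ∑ F ∈ (pin S).powersetCard (2*S.card-3), p ^ (2*S.card-3) :=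
          Finset.sum_congr rfl heval
      _ = (((pin S).card.choose (2*S.card-3) : ℕ) : ℝ) * p ^ (2*S.card-3) := by
          rw [Finset.sum_const, Finset.card_powersetCard, nsmul_eq_mul]
      _ = ((S.card.choose 2).choose (2*S.card-3) : ℝ) * p ^ (2*S.card-3) := by
          rw [hpincard]
      _ ≤ ((S.card.choose 2).choose (2*S.card-3) : ℝ) * p0 ^ (2*S.card-3) := by
          apply mul_le_mul_of_nonneg_left
            (pow_le_pow_left₀ hp0.le hple _) (Nat.cast_nonneg _)
  have hSSeq : SS = (Finset.Icc L (5*L)).biUnion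
      (fun s => Finset.univ.powersetCard s) := by
    ext S
    simp only [hSSdef, Finset.mem_filter, Finset.mem_powerset, Finset.mem_biUnion,
      Finset.mem_Icc, Finset.mem_powersetCard, Finset.subset_univ, true_and]
    constructor
    · rintro ⟨h1, h2⟩
      exact ⟨S.card, ⟨h1, h2⟩, rfl⟩
    · rintro ⟨s, ⟨h1, h2⟩, h3⟩
      rw [h3] at *
      exact ⟨h1, h2⟩
  have hdisj : ∀ s1 ∈ Finset.Icc L (5*L), ∀ s2 ∈ Finset.Icc L (5*L), s1 ≠ s2 →
      Disjoint (Finset.univ.powersetCard s1 : Finset (Finset (Fin n)))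
        (Finset.univ.powersetCard s2) := by
    intro s1 _ s2 _ hne
    rw [Finset.disjoint_left]
    intro S hS1 hS2
    rw [Finset.mem_powersetCard] at hS1 hS2
    exact hne (hS1.2 ▸ hS2.2 ▸ rfl)
  have hAfinal : gnpProb n p EvA ≤
      (4*(L:ℝ)+1) * (Real.exp 1 ^ 6 * Real.exp (-(Real.log n)/20)) := by
    have hsum2 : ∑ S ∈ SS, ((S.card.choose 2).choose (2*S.card-3) : ℝ) * p0 ^ (2*S.card-3)
        ≤ (4*(L:ℝ)+1) * (Real.exp 1 ^ 6 * Real.exp (-(Real.log n)/20)) := by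
      rw [hSSeq, Finset.sum_biUnion hdisj]
      have hinner : ∀ s ∈ Finset.Icc L (5*L),
          (∑ S ∈ (Finset.univ.powersetCard s : Finset (Finset (Fin n))),
            ((S.card.choose 2).choose (2*S.card-3) : ℝ) * p0 ^ (2*S.card-3))
          ≤ Real.exp 1 ^ 6 * Real.exp (-(Real.log n)/20) := by
        intro s hs
        rw [Finset.mem_Icc] at hs
        have hconst : ∀ S ∈ (Finset.univ.powersetCard s : Finset (Finset (Fin n))),
            ((S.card.choose 2).choose (2*S.card-3) : ℝ) * p0 ^ (2*S.card-3)
            = ((s.choose 2).choose (2*s-3) : ℝ) * p0 ^ (2*s-3) := by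
          intro S hSmem
          rw [Finset.mem_powersetCard] at hSmem
          rw [hSmem.2]
        rw [Finset.sum_congr rfl hconst, Finset.sum_const, Finset.card_powersetCard,
          Finset.card_univ, Fintype.card_fin, nsmul_eq_mul]
        have hnm := numeric_main n s L hlog hL1 hL2 hs.1 hs.2
        calc (n.choose s : ℝ) * (((s.choose 2).choose (2*s-3) : ℝ) * p0 ^ (2*s-3))
            = (n.choose s : ℝ) * ((s.choose 2).choose (2*s-3) : ℝ) * p0 ^ (2*s-3) := by
              ring
          _ ≤ Real.exp 1 ^ 6 * Real.exp (-(Real.log n)/20) := by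
              rw [hp0def]
              exact hnm
      calc ∑ s ∈ Finset.Icc L (5*L),
            (∑ S ∈ (Finset.univ.powersetCard s : Finset (Finset (Fin n))),
              ((S.card.choose 2).choose (2*S.card-3) : ℝ) * p0 ^ (2*S.card-3))
          ≤ ∑ s ∈ Finset.Icc L (5*L),
              (Real.exp 1 ^ 6 * Real.exp (-(Real.log n)/20)) :=
            Finset.sum_le_sum hinner
        _ = ((Finset.Icc L (5*L)).card : ℝ) * (Real.exp 1 ^ 6 * Real.exp (-(Real.log n)/20)) := by
            rw [Finset.sum_const, nsmul_eq_mul]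
        _ ≤ (4*(L:ℝ)+1) * (Real.exp 1 ^ 6 * Real.exp (-(Real.log n)/20)) := by
            apply mul_le_mul_of_nonneg_right _ (by positivity)
            rw [Nat.card_Icc]
            have h1 : 5*L + 1 - L = 4*L + 1 := by omega
            rw [h1]
            push_cast
            linarith
    exact le_trans hlev1 (le_trans (Finset.sum_le_sum hlev2) hsum2)
  -- combine
  set X : ℝ := Real.exp (-(Real.log n)/20) with hXdef
  have hXpos : 0 < X := Real.exp_pos _
  have he6 : (1:ℝ) ≤ Real.exp 1 ^ 6 := by
    have h1e : (1:ℝ) ≤ Real.exp 1 := by linarith [Real.exp_one_gt_d9]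
    calc (1:ℝ) = 1^6 := by norm_num
      _ ≤ (Real.exp 1)^6 := pow_le_pow_left₀ (by norm_num) h1e 6
  have hlp : (0:ℝ) ≤ Real.log n + 1 := by linarith
  have hcoef : 4*(L:ℝ)+1 ≤ 5*(Real.log n + 1) := by linarith
  calc gnpProb n p (fun E => Percolates (SimpleGraph.completeGraph (Fin 4)) (↑E : Set (Sym2 (Fin n))))
      ≤ gnpProb n p EvA + gnpProb n p EvB := hsplit
    _ ≤ (4*(L:ℝ)+1) * (Real.exp 1 ^ 6 * X) + 8 * (Real.log n + 1) * X :=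
        add_le_add hAfinal hBfinal
    _ ≤ 5*(Real.log n + 1) * (Real.exp 1 ^ 6 * X) +
          8 * (Real.log n + 1) * (Real.exp 1 ^ 6 * X) := by
        apply add_le_add
        · apply mul_le_mul_of_nonneg_right hcoef (by positivity)
        · have h2 : X ≤ Real.exp 1 ^ 6 * X := by
            calc X = 1 * X := (one_mul X).symm
              _ ≤ Real.exp 1 ^ 6 * X := mul_le_mul_of_nonneg_right he6 hXpos.le
          apply mul_le_mul_of_nonneg_left h2 (by positivity)
    _ = 13 * Real.exp 1 ^ 6 * ((Real.log n + 1) * X) := by ring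

end Assembly

/-- **Proposition 23.** If `p(n)² n log n ≤ 16/e⁵` for all `n ≥ 2`, then
`P(⟨G_{n,p(n)}⟩_{K_4} = E(K_n)) → 0` as `n → ∞`. -/
theorem K4_percolation_lower (p : ℕ → ℝ) (hp : ∀ n, p n ∈ Set.Ioo (0 : ℝ) 1)
    (hbound : ∀ n : ℕ, 2 ≤ n → (p n) ^ 2 * (n : ℝ) * Real.log n ≤ 16 / Real.exp 1 ^ 5) :
    Filter.Tendsto
      (fun n : ℕ => gnpProb n (p n)
        (fun E => Percolates (SimpleGraph.completeGraph (Fin 4)) (↑E : Set (Sym2 (Fin n)))))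
      Filter.atTop (nhds 0) := by
  have hcomp : Filter.Tendsto (fun n : ℕ => Real.log n) Filter.atTop Filter.atTop :=
    Real.tendsto_log_atTop.comp tendsto_natCast_atTop_atTop
  have hz : Filter.Tendsto (fun n : ℕ => Real.log n / 20) Filter.atTop Filter.atTop :=
    hcomp.atTop_div_const (by norm_num)
  have h1 : Filter.Tendsto (fun z : ℝ => z * Real.exp (-z)) Filter.atTop (nhds 0) := by
    have := Real.tendsto_pow_mul_exp_neg_atTop_nhds_zero 1
    simpa using this
  have h2 : Filter.Tendsto (fun z : ℝ => Real.exp (-z)) Filter.atTop (nhds 0) := by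
    have := Real.tendsto_pow_mul_exp_neg_atTop_nhds_zero 0
    simpa using this
  have h3 : Filter.Tendsto (fun z : ℝ => 20 * (z * Real.exp (-z)) + Real.exp (-z))
      Filter.atTop (nhds 0) := by
    have := (h1.const_mul (20:ℝ)).add h2
    simpa using this
  have h4 : Filter.Tendsto (fun n : ℕ =>
      20 * ((Real.log n/20) * Real.exp (-(Real.log n/20))) + Real.exp (-(Real.log n/20)))
      Filter.atTop (nhds 0) := h3.comp hz
  have h5 : Filter.Tendsto (fun n : ℕ =>
      13 * Real.exp 1 ^ 6 * ((Real.log n + 1) * Real.exp (-(Real.log n)/20)))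
      Filter.atTop (nhds 0) := by
    have h6 := h4.const_mul (13 * Real.exp 1 ^ 6)
    rw [mul_zero] at h6
    apply h6.congr
    intro n
    have harg : -(Real.log n/20) = -(Real.log (n:ℝ))/20 := by ring
    rw [harg]
    ring
  have hev : ∀ᶠ n : ℕ in Filter.atTop, (1000:ℝ) ≤ Real.log n :=
    hcomp.eventually_ge_atTop 1000
  apply tendsto_of_tendsto_of_tendsto_of_le_of_le' tendsto_const_nhds h5
  · exact Filter.Eventually.of_forall (fun n =>
      gnpProb_nonneg (hp n).1.le (hp n).2.le _)
  · apply hev.mono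
    intro n hn
    have hn2 : 2 ≤ n := by
      by_contra h
      push_neg at h
      interval_cases n
      · simp [Real.log_zero] at hn; linarith
      · simp [Real.log_one] at hn; linarith
    exact prob_bound (hp n) (hbound n hn2) hn
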